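/- arXiv:1106.1723 — 7 statements merged into one kernel-verified Lean document; each statement's English description precedes it below -/
import Mathlib

section
/- Let X = {1,2,3,4,5,6} and let C be the union of {{1,2}, {3,4}, {5,6}, {1,2,3}, {4,5,6}, {3,4,5}, {1,2,6}, {1,5,6}, {2,3,4}} with the set of the seven trivial clusters of X. Then C satisfies both necessary conditions from Lemma 1 — namely: (a) for all A, B ∈ C with B covering A in C, B \ A ∈ C; and (b) every C₀ ∈ C with |C₀| > 1 is the union of two disjoint members of C — yet C is not bureaucratic; indeed the hierarchy {{1,2}, {3,4}, {5,6}} does not extend to a maximum hierarchy on X using only elements of C. -/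
/-- A hierarchy on a finite set `X` (here, the type `α`): a collection of
nonempty subsets of `X` containing `X` itself, in which any two members
intersect in `∅` or in one of the two members. -/
def IsHierarchy {α : Type*} [Fintype α] [DecidableEq α] (H : Finset (Finset α)) : Prop :=
  ∅ ∉ H ∧ Finset.univ ∈ H ∧
    ∀ A ∈ H, ∀ B ∈ H, A ∩ B = ∅ ∨ A ∩ B = A ∨ A ∩ B = B

/-- A hierarchy is maximum if it has cardinality `2|X| - 1`. -/
def IsMaximumHierarchy {α : Type*} [Fintype α] [DecidableEq α] (H : Finset (Finset α)) : Prop :=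
  IsHierarchy H ∧ H.card = 2 * Fintype.card α - 1

/-- A collection `C` of subsets of `X` is bureaucratic if it is nonempty, does not
contain `∅`, and every hierarchy contained in `C` extends to a maximum hierarchy
contained in `C`. -/
def IsBureaucratic {α : Type*} [Fintype α] [DecidableEq α] (C : Set (Finset α)) : Prop :=
  C.Nonempty ∧ ∅ ∉ C ∧
    ∀ H : Finset (Finset α), ↑H ⊆ C → IsHierarchy H →
      ∃ H' : Finset (Finset α), H ⊆ H' ∧ ↑H' ⊆ C ∧ IsMaximumHierarchy H'

/-- The counterexample collection on `X = {1,…,6}` (represented by `Fin 6`, with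
`i` standing for `i+1`): the nine listed clusters together with the seven trivial ones. -/
def exampleC : Set (Finset (Fin 6)) :=
  {{0, 1}, {2, 3}, {4, 5}, {0, 1, 2}, {3, 4, 5}, {2, 3, 4}, {0, 1, 5}, {0, 4, 5}, {1, 2, 3},
    {0}, {1}, {2}, {3}, {4}, {5}, Finset.univ}

/-- `exampleC` as a `Finset`. -/
def CF : Finset (Finset (Fin 6)) :=
  {{0, 1}, {2, 3}, {4, 5}, {0, 1, 2}, {3, 4, 5}, {2, 3, 4}, {0, 1, 5}, {0, 4, 5}, {1, 2, 3},
    {0}, {1}, {2}, {3}, {4}, {5}, Finset.univ}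

lemma exampleC_eq : exampleC = ↑CF := by
  ext s; simp [exampleC, CF]

/-- The members of `exampleC` compatible (in the hierarchy sense) with all three of
`{0,1}`, `{2,3}`, `{4,5}`. -/
def DD : Finset (Finset (Fin 6)) :=
  {{0, 1}, {2, 3}, {4, 5}, {0}, {1}, {2}, {3}, {4}, {5}, Finset.univ}

lemma key : ¬ ∃ H' : Finset (Finset (Fin 6)),
    ({{0, 1}, {2, 3}, {4, 5}} : Finset (Finset (Fin 6))) ⊆ H' ∧
    ↑H' ⊆ exampleC ∧ IsMaximumHierarchy H' := by
  rintro ⟨H', hsub, hC, ⟨⟨-, -, hp⟩, hcard⟩⟩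
  rw [exampleC_eq, Finset.coe_subset] at hC
  have h01 : ({0,1} : Finset (Fin 6)) ∈ H' := hsub (by decide)
  have h23 : ({2,3} : Finset (Fin 6)) ∈ H' := hsub (by decide)
  have h45 : ({4,5} : Finset (Fin 6)) ∈ H' := hsub (by decide)
  have hDD : H' ⊆ DD := by
    intro s hs
    have hm : s ∈ CF := hC hs
    simp only [CF, Finset.mem_insert, Finset.mem_singleton] at hm
    rcases hm with h|h|h|h|h|h|h|h|h|h|h|h|h|h|h|h <;> subst h <;>
      first
      | decide
      | (exact absurd (hp _ hs _ h23) (by decide))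
      | (exact absurd (hp _ hs _ h45) (by decide))
      | (exact absurd (hp _ hs _ h01) (by decide))
  have := Finset.card_le_card hDD
  have hDDcard : DD.card = 10 := by decide
  rw [Fintype.card_fin] at hcard
  omega

set_option maxRecDepth 40000 in
/-- `exampleC` satisfies both necessary conditions of Lemma 1 (the covering condition and
the disjoint-union condition) but is not bureaucratic: the hierarchy
`{{1,2},{3,4},{5,6}}` does not extend to a maximum hierarchy inside `exampleC`. -/
theorem exampleC_not_bureaucratic :
    (∀ A ∈ exampleC, ∀ B ∈ exampleC, A ⊂ B → (¬∃ D ∈ exampleC, A ⊂ D ∧ D ⊂ B) →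
        B \ A ∈ exampleC) ∧
    (∀ C₀ ∈ exampleC, 1 < C₀.card →
        ∃ A ∈ exampleC, ∃ B ∈ exampleC, Disjoint A B ∧ C₀ = A ∪ B) ∧
    ¬ IsBureaucratic exampleC ∧
    ¬ ∃ H' : Finset (Finset (Fin 6)),
        ({{0, 1}, {2, 3}, {4, 5}} : Finset (Finset (Fin 6))) ⊆ H' ∧
        ↑H' ⊆ exampleC ∧ IsMaximumHierarchy H' := by
  refine ⟨?_, ?_, ?_, key⟩
  · rw [exampleC_eq]
    simp only [Finset.mem_coe]
    decide
  · rw [exampleC_eq]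
    simp only [Finset.mem_coe]
    decide
  · rintro ⟨-, -, h⟩
    obtain ⟨H', hHH', hC, hmax⟩ :=
      h ({{0,1},{2,3},{4,5},Finset.univ} : Finset (Finset (Fin 6)))
        (by rw [exampleC_eq, Finset.coe_subset]; decide)
        (by unfold IsHierarchy; decide)
    exact key ⟨H', Finset.Subset.trans (by decide) hHH', hC, hmax⟩
end

section
/- Let X = {1,2,3} and let T denote the set of trivial clusters of X. Then C₁ = T ∪ {{1,2}} and C₂ = T ∪ {{2,3}} are both bureaucratic collections of subsets of X, but their intersection C₁ ∩ C₂ = T is not bureaucratic. -/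
/-- The trivial clusters of `X = {1,2,3}` (represented by `Fin 3`). -/
def trivial3 : Set (Finset (Fin 3)) := {{0}, {1}, {2}, Finset.univ}

lemma bureau_aux (e : Finset (Fin 3))
    (hmax : IsMaximumHierarchy ({{0}, {1}, {2}, e, Finset.univ} : Finset (Finset (Fin 3)))) :
    IsBureaucratic (insert e trivial3) := by
  refine ⟨⟨e, Or.inl rfl⟩, ?_, ?_⟩
  · intro h
    rcases h with h | h
    · have := hmax.1.1
      simp [← h] at this
    · simp only [trivial3, Set.mem_insert_iff, Set.mem_singleton_iff] at h
      rcases h with h | h | h | h <;> exact absurd h.symm (by decide)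
  · intro H hHC _
    refine ⟨{{0}, {1}, {2}, e, Finset.univ}, ?_, ?_, hmax⟩
    · intro x hx
      have := hHC hx
      simp only [trivial3, Set.mem_insert_iff, Set.mem_singleton_iff] at this
      simp only [Finset.mem_insert, Finset.mem_singleton]
      tauto
    · intro x hx
      simp only [Finset.coe_insert, Finset.coe_singleton, Set.mem_insert_iff,
        Set.mem_singleton_iff] at hx
      simp only [trivial3, Set.mem_insert_iff, Set.mem_singleton_iff]
      tauto

/-- `T ∪ {{1,2}}` and `T ∪ {{2,3}}` are bureaucratic, but their intersection,
the set `T` of trivial clusters, is not. -/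
theorem inter_of_bureaucracies_not_bureaucratic :
    IsBureaucratic (insert ({0, 1} : Finset (Fin 3)) trivial3) ∧
    IsBureaucratic (insert ({1, 2} : Finset (Fin 3)) trivial3) ∧
    (insert ({0, 1} : Finset (Fin 3)) trivial3) ∩ (insert ({1, 2} : Finset (Fin 3)) trivial3)
      = trivial3 ∧
    ¬ IsBureaucratic trivial3 := by
  refine ⟨bureau_aux _ (by unfold IsMaximumHierarchy IsHierarchy; decide), bureau_aux _ (by unfold IsMaximumHierarchy IsHierarchy; decide), ?_, ?_⟩
  · ext x
    simp only [Set.mem_inter_iff, Set.mem_insert_iff, trivial3, Set.mem_singleton_iff]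
    constructor
    · rintro ⟨h1 | h1, h2 | h2⟩ <;> first | tauto | (exfalso; rw [h1] at h2; revert h2; decide)
    · tauto
  · rintro ⟨-, -, h⟩
    obtain ⟨H', -, hsub, -, hcard⟩ := h {Finset.univ} (by
        intro x hx
        simp only [Finset.coe_singleton, Set.mem_singleton_iff] at hx
        simp [trivial3, hx]) (by unfold IsHierarchy; decide)
    have hsub' : H' ⊆ ({{0}, {1}, {2}, Finset.univ} : Finset (Finset (Fin 3))) := by
      intro x hx
      have := hsub hx
      simp only [trivial3, Set.mem_insert_iff, Set.mem_singleton_iff] at this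
      simp only [Finset.mem_insert, Finset.mem_singleton]
      tauto
    have := Finset.card_le_card hsub'
    rw [hcard] at this
    revert this
    decide
end

section
/- Let n ≥ 1 and let X = {1, 2, …, n}. The collection C of all intervals of X, i.e., all sets of the form [i, j] = {k : i ≤ k ≤ j} with 1 ≤ i ≤ j ≤ n, is bureaucratic. -/
open Finset

namespace BurAux

variable {n : ℕ}

/-- interval predicate -/
def IsIntv (S : Finset (Fin n)) : Prop := ∃ i j : Fin n, i ≤ j ∧ S = Finset.Icc i j

/-- compatible with every member of H -/
def Compat (H : Finset (Finset (Fin n))) (S : Finset (Fin n)) : Prop :=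
  ∀ B ∈ H, B ∩ S = ∅ ∨ B ⊆ S ∨ S ⊆ B

/-- anchored: min of the minimal container of S (in H ∪ {univ}) equals min of S -/
def Anch (H : Finset (Finset (Fin n))) (S : Finset (Fin n)) : Prop :=
  ∃ B : Finset (Fin n), (B ∈ H ∨ B = Finset.univ) ∧ S ⊆ B ∧
    (∀ B' ∈ H, S ⊆ B' → B ⊆ B') ∧ ∀ x ∈ B, ∃ y ∈ S, y ≤ x

/-- the completion -/
noncomputable def Hc (H : Finset (Finset (Fin n))) : Finset (Finset (Fin n)) :=
  @Finset.filter _ (fun S => IsIntv S ∧ Compat H S ∧ (S.card = 1 ∨ Anch H S))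
    (Classical.decPred _) Finset.univ

lemma mem_Hc {H : Finset (Finset (Fin n))} {S : Finset (Fin n)} :
    S ∈ Hc H ↔ IsIntv S ∧ Compat H S ∧ (S.card = 1 ∨ Anch H S) := by
  rw [Hc, @Finset.mem_filter _ _ (Classical.decPred _)]
  simp

lemma isIntv_nonempty {S : Finset (Fin n)} (h : IsIntv S) : S.Nonempty := by
  obtain ⟨i, j, hij, rfl⟩ := h
  exact Finset.nonempty_Icc.mpr hij

lemma nested {H : Finset (Finset (Fin n))} (hH : IsHierarchy H) {A B : Finset (Fin n)}
    (hA : A ∈ H) (hB : B ∈ H) (hx : (A ∩ B).Nonempty) : A ⊆ B ∨ B ⊆ A := by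
  rcases hH.2.2 A hA B hB with h | h | h
  · rw [h] at hx; exact absurd hx Finset.not_nonempty_empty
  · exact Or.inl (Finset.inter_eq_left.mp h)
  · exact Or.inr (Finset.inter_eq_right.mp h)

lemma exists_min_container {H : Finset (Finset (Fin n))} (hH : IsHierarchy H)
    {T : Finset (Fin n)} (hT : T.Nonempty) :
    ∃ B₀ : Finset (Fin n), (B₀ ∈ H ∨ B₀ = Finset.univ) ∧ T ⊆ B₀ ∧
      ∀ B' ∈ H, T ⊆ B' → B₀ ⊆ B' := by
  classical
  set CS : Finset (Finset (Fin n)) := insert Finset.univ (H.filter (fun B => T ⊆ B)) with hCS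
  have hne : CS.Nonempty := ⟨Finset.univ, Finset.mem_insert_self _ _⟩
  obtain ⟨B₀, hB₀, hmin⟩ := CS.exists_min_image Finset.card hne
  have hB₀m : (B₀ ∈ H ∨ B₀ = Finset.univ) ∧ T ⊆ B₀ := by
    rcases Finset.mem_insert.mp hB₀ with h | h
    · exact ⟨Or.inr h, h ▸ Finset.subset_univ T⟩
    · exact ⟨Or.inl (Finset.mem_filter.mp h).1, (Finset.mem_filter.mp h).2⟩
  refine ⟨B₀, hB₀m.1, hB₀m.2, ?_⟩
  intro B' hB' hTB'
  have hB'CS : B' ∈ CS := Finset.mem_insert.mpr (Or.inr (Finset.mem_filter.mpr ⟨hB', hTB'⟩))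
  have hcard : B₀.card ≤ B'.card := hmin B' hB'CS
  rcases hB₀m.1 with h | h
  · obtain ⟨x, hx⟩ := hT
    rcases nested hH h hB' ⟨x, Finset.mem_inter.mpr ⟨hB₀m.2 hx, hTB' hx⟩⟩ with h2 | h2
    · exact h2
    · rw [Finset.eq_of_subset_of_card_le h2 hcard]
  · subst h
    have : B' = Finset.univ := Finset.eq_of_subset_of_card_le (Finset.subset_univ B') hcard
    rw [this]

lemma singleton_mem_Hc {H : Finset (Finset (Fin n))} (x : Fin n) : ({x} : Finset (Fin n)) ∈ Hc H := by
  refine mem_Hc.mpr ⟨⟨x, x, le_refl x, (Finset.Icc_self x).symm⟩, ?_, Or.inl (Finset.card_singleton x)⟩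
  intro B hB
  by_cases hxB : x ∈ B
  · exact Or.inr (Or.inr (Finset.singleton_subset_iff.mpr hxB))
  · refine Or.inl (Finset.eq_empty_iff_forall_notMem.mpr ?_)
    intro y hy
    rw [Finset.mem_inter, Finset.mem_singleton] at hy
    exact hxB (hy.2 ▸ hy.1)

lemma mem_Hc_of_mem {H : Finset (Finset (Fin n))} (hHC : ∀ S ∈ H, IsIntv S)
    (hH : IsHierarchy H) {S : Finset (Fin n)} (hS : S ∈ H) : S ∈ Hc H := by
  refine mem_Hc.mpr ⟨hHC S hS, ?_, Or.inr ⟨S, Or.inl hS, Finset.Subset.refl S,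
    fun B' _ h => h, fun x hx => ⟨x, hx, le_refl x⟩⟩⟩
  intro B hB
  rcases hH.2.2 B hB S hS with h | h | h
  · exact Or.inl h
  · exact Or.inr (Or.inl (Finset.inter_eq_left.mp h))
  · exact Or.inr (Or.inr (Finset.inter_eq_right.mp h))

lemma univ_mem_Hc [NeZero n] {H : Finset (Finset (Fin n))} : (Finset.univ : Finset (Fin n)) ∈ Hc H := by
  have hn : 1 ≤ n := Nat.one_le_iff_ne_zero.mpr (NeZero.ne n)
  refine mem_Hc.mpr ⟨⟨0, ⟨n - 1, by omega⟩, ?_, ?_⟩, ?_, Or.inr ⟨Finset.univ, Or.inr rfl,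
    Finset.Subset.refl _, fun B' _ h => h, fun x hx => ⟨x, Finset.mem_univ x, le_refl x⟩⟩⟩
  · rw [Fin.le_def]; simp
  · ext x
    simp only [Finset.mem_univ, Finset.mem_Icc, true_iff]
    constructor
    · rw [Fin.le_def]; simp
    · rw [Fin.le_def]
      have := x.isLt
      simp only []
      omega
  · intro B hB
    exact Or.inr (Or.inl (Finset.subset_univ B))

lemma anch_of_subset {H : Finset (Finset (Fin n))} (hH : IsHierarchy H)
    {i j : Fin n} {L S : Finset (Fin n)} (hSij : S = Finset.Icc i j)
    (hAn : Anch H S) (hL : L ⊆ S) (hiL : i ∈ L) : Anch H L := by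
  obtain ⟨P, hPm, hSP, hPmin, hPanch⟩ := hAn
  have hiP : ∀ x ∈ P, i ≤ x := by
    intro x hx
    obtain ⟨y, hyS, hyx⟩ := hPanch x hx
    rw [hSij, Finset.mem_Icc] at hyS
    exact le_trans hyS.1 hyx
  obtain ⟨B₀, hB₀m, hLB₀, hB₀min⟩ := exists_min_container hH ⟨i, hiL⟩
  refine ⟨B₀, hB₀m, hLB₀, hB₀min, ?_⟩
  intro x hx
  refine ⟨i, hiL, ?_⟩
  rcases hPm with h | h
  · exact hiP x (hB₀min P h (Finset.Subset.trans hL hSP) hx)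
  · exact hiP x (h ▸ Finset.mem_univ x)


lemma hc_compat {H : Finset (Finset (Fin n))} (hH : IsHierarchy H)
    {S T : Finset (Fin n)} (hS : S ∈ Hc H) (hT : T ∈ Hc H) :
    S ∩ T = ∅ ∨ S ⊆ T ∨ T ⊆ S := by
  obtain ⟨hSi, hSc, hSa⟩ := mem_Hc.mp hS
  obtain ⟨hTi, hTc, hTa⟩ := mem_Hc.mp hT
  by_cases hST : S ∩ T = ∅
  · exact Or.inl hST
  by_cases h1 : S ⊆ T
  · exact Or.inr (Or.inl h1)
  by_cases h2 : T ⊆ S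
  · exact Or.inr (Or.inr h2)
  exfalso
  -- both are non-singletons (a singleton meeting T would be contained in it)
  obtain ⟨x, hx⟩ := Finset.nonempty_iff_ne_empty.mpr hST
  rw [Finset.mem_inter] at hx
  have hSanch : Anch H S := by
    rcases hSa with h | h
    · obtain ⟨z, rfl⟩ := Finset.card_eq_one.mp h
      rw [Finset.mem_singleton] at hx
      exact absurd (Finset.singleton_subset_iff.mpr (hx.1 ▸ hx.2)) h1
    · exact h
  have hTanch : Anch H T := by
    rcases hTa with h | h
    · obtain ⟨z, rfl⟩ := Finset.card_eq_one.mp h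
      rw [Finset.mem_singleton] at hx
      exact absurd (Finset.singleton_subset_iff.mpr (hx.2 ▸ hx.1)) h2
    · exact h
  obtain ⟨i, j, hij, rfl⟩ := hSi
  obtain ⟨k, l, hkl, rfl⟩ := hTi
  obtain ⟨s, hsS, hsT⟩ := Finset.not_subset.mp h1
  obtain ⟨t, htT, htS⟩ := Finset.not_subset.mp h2
  simp only [Finset.mem_Icc] at hx hsS htT
  rw [Finset.mem_Icc, not_and_or, not_le, not_le] at hsT htS
  rw [Fin.le_def] at hij hkl
  simp only [Fin.le_def, Fin.lt_def] at hx hsS hsT htT htS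
  -- derive which way the intervals cross
  have hcase : (i.val < k.val ∧ k.val ≤ j.val ∧ j.val < l.val) ∨
      (k.val < i.val ∧ i.val ≤ l.val ∧ l.val < j.val) := by omega
  -- symmetric argument
  have key : ∀ (i j k l : Fin n), i.val < k.val → k.val ≤ j.val → j.val < l.val →
      Compat H (Finset.Icc i j) → Anch H (Finset.Icc k l) → False := by
    intro i j k l h1' h2' h3' hScomp hTanch'
    obtain ⟨P, hPm, hTP, _, hPanch⟩ := hTanch'
    have hkle : ∀ x ∈ P, k ≤ x := by
      intro x hxP
      obtain ⟨y, hyT, hyx⟩ := hPanch x hxP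
      rw [Finset.mem_Icc] at hyT
      exact le_trans hyT.1 hyx
    have hPH : P ∈ H := by
      rcases hPm with h | h
      · exact h
      · exfalso
        have := hkle i (h ▸ Finset.mem_univ i)
        rw [Fin.le_def] at this
        omega
    have hjT : j ∈ Finset.Icc k l := by
      rw [Finset.mem_Icc]
      constructor <;> rw [Fin.le_def] <;> omega
    rcases hScomp P hPH with h | h | h
    · have : j ∈ P ∩ Finset.Icc i j := by
        rw [Finset.mem_inter]
        refine ⟨hTP hjT, ?_⟩
        rw [Finset.mem_Icc]
        constructor <;> rw [Fin.le_def] <;> omega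
      rw [h] at this
      exact absurd this (Finset.notMem_empty j)
    · -- P ⊆ Icc i j, so Icc k l ⊆ Icc i j, but l ∉ Icc i j
      have hlT : l ∈ Finset.Icc k l := Finset.mem_Icc.mpr ⟨Fin.le_def.mpr (by omega), le_refl l⟩
      have := h (hTP hlT)
      simp only [Finset.mem_Icc, Fin.le_def] at this
      omega
    · -- Icc i j ⊆ P, but then k ≤ i
      have := hkle i (h (Finset.mem_Icc.mpr ⟨le_refl i, Fin.le_def.mpr (by omega)⟩))
      rw [Fin.le_def] at this
      omega
  rcases hcase with ⟨a, b, c⟩ | ⟨a, b, c⟩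
  · exact key i j k l a b c hSc hTanch
  · exact key k l i j a b c hTc hSanch


def SplitAt (H : Finset (Finset (Fin n))) (A : Finset (Fin n)) (m : Fin n) : Prop :=
  ∃ L R : Finset (Fin n), L ∈ Hc H ∧ R ∈ Hc H ∧
    (∀ x, x ∈ L ↔ x ∈ A ∧ x ≤ m) ∧ (∀ x, x ∈ R ↔ x ∈ A ∧ m < x) ∧
    m ∈ A ∧ ∃ x ∈ A, m < x

lemma exists_split {H : Finset (Finset (Fin n))} (hHC : ∀ S ∈ H, IsIntv S)
    (hH : IsHierarchy H) {A : Finset (Fin n)} (hA : A ∈ Hc H) (h2 : 2 ≤ A.card) :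
    ∃ m : Fin n, SplitAt H A m := by
  classical
  obtain ⟨hAi, hAc, hAa⟩ := mem_Hc.mp hA
  obtain ⟨i, j, hij, hAij⟩ := hAi
  have hAn : Anch H A := by
    rcases hAa with h | h
    · omega
    · exact h
  have hijlt : i.val < j.val := by
    rcases lt_or_eq_of_le hij with h | h
    · exact Fin.lt_def.mp h
    · exfalso
      rw [h, Finset.Icc_self] at hAij
      rw [hAij, Finset.card_singleton] at h2
      omega
  have hjn : j.val < n := j.isLt
  have hmemA : ∀ x : Fin n, x ∈ A ↔ i.val ≤ x.val ∧ x.val ≤ j.val := by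
    intro x
    rw [hAij, Finset.mem_Icc]
    simp only [Fin.le_def]
  set D : Finset (Finset (Fin n)) := H.filter (fun B => B ⊆ A ∧ B ≠ A ∧ j ∈ B) with hD
  have hjA : j ∈ A := (hmemA j).mpr ⟨by omega, le_refl _⟩
  -- builder for the left part Icc i m
  have build : ∀ m : Fin n, i.val ≤ m.val → m.val < j.val →
      (∀ B ∈ H, B ∩ Finset.Icc i m ≠ ∅ →
        B ⊆ Finset.Icc i m ∨ Finset.Icc i m ⊆ B) →
      Finset.Icc i m ∈ Hc H := by
    intro m hm1 hm2 hcomp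
    refine mem_Hc.mpr ⟨⟨i, m, Fin.le_def.mpr hm1, rfl⟩, ?_, Or.inr ?_⟩
    · intro B hB
      by_cases hint : B ∩ Finset.Icc i m = ∅
      · exact Or.inl hint
      · rcases hcomp B hB hint with h | h
        · exact Or.inr (Or.inl h)
        · exact Or.inr (Or.inr h)
    · refine anch_of_subset hH hAij hAn ?_ ?_
      · rw [hAij]
        exact Finset.Icc_subset_Icc_right (Fin.le_def.mpr (by omega))
      · rw [Finset.mem_Icc]
        exact ⟨le_refl i, Fin.le_def.mpr hm1⟩
  by_cases hDne : D.Nonempty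
  · -- there is a maximal proper member of H inside A containing j
    obtain ⟨Bs, hBsD, hBsmax⟩ := D.exists_max_image Finset.card hDne
    rw [hD, Finset.mem_filter] at hBsD
    obtain ⟨hBsH, hBsA, hBsne, hjBs⟩ := hBsD
    obtain ⟨c, d, hcd, hBscd⟩ := hHC Bs hBsH
    have hmemBs : ∀ x : Fin n, x ∈ Bs ↔ c.val ≤ x.val ∧ x.val ≤ d.val := by
      intro x
      rw [hBscd, Finset.mem_Icc]
      simp only [Fin.le_def]
    have hcdv : c.val ≤ d.val := Fin.le_def.mp hcd
    have hdj : d.val = j.val := by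
      have h1 : j.val ≤ d.val := ((hmemBs j).mp hjBs).2
      have h2' : d.val ≤ j.val := ((hmemA d).mp (hBsA ((hmemBs d).mpr ⟨hcdv, le_refl _⟩))).2
      omega
    have hic : i.val ≤ c.val := ((hmemA c).mp (hBsA ((hmemBs c).mpr ⟨le_refl _, hcdv⟩))).1
    have hicne : i.val < c.val := by
      rcases Nat.lt_or_ge i.val c.val with h | h
      · exact h
      · exfalso
        apply hBsne
        rw [hBscd, hAij]
        congr 1 <;> apply Fin.ext <;> omega
    obtain ⟨m, hmval⟩ : ∃ m : Fin n, m.val = c.val - 1 := ⟨⟨c.val - 1, by omega⟩, rfl⟩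
    have hm1 : i.val ≤ m.val := by omega
    have hm2 : m.val < j.val := by omega
    refine ⟨m, Finset.Icc i m, Bs, build m hm1 hm2 ?_, mem_Hc_of_mem hHC hH hBsH,
      ?_, ?_, (hmemA m).mpr (by omega), ⟨j, hjA, Fin.lt_def.mpr (by omega)⟩⟩
    · -- compatibility of the left part with every member of H
      intro B hB hint
      obtain ⟨z, hz⟩ := Finset.nonempty_iff_ne_empty.mpr hint
      rw [Finset.mem_inter] at hz
      obtain ⟨a, b, hab, hBab⟩ := hHC B hB
      have hmemB : ∀ x : Fin n, x ∈ B ↔ a.val ≤ x.val ∧ x.val ≤ b.val := by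
        intro x
        rw [hBab, Finset.mem_Icc]
        simp only [Fin.le_def]
      have habv : a.val ≤ b.val := Fin.le_def.mp hab
      have hmemL : ∀ x : Fin n, x ∈ Finset.Icc i m ↔ i.val ≤ x.val ∧ x.val ≤ m.val := by
        intro x
        rw [Finset.mem_Icc]
        simp only [Fin.le_def]
      have hzB := (hmemB z).mp hz.1
      have hzL := (hmemL z).mp hz.2
      have hzA : z ∈ A := (hmemA z).mpr ⟨hzL.1, by omega⟩
      rcases hAc B hB with h | h | h
      · exfalso
        have : z ∈ B ∩ A := Finset.mem_inter.mpr ⟨hz.1, hzA⟩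
        rw [h] at this
        exact absurd this (Finset.notMem_empty z)
      · -- B ⊆ A
        have haA := (hmemA a).mp (h ((hmemB a).mpr ⟨le_refl _, habv⟩))
        have hbA := (hmemA b).mp (h ((hmemB b).mpr ⟨habv, le_refl _⟩))
        by_cases hb : b.val ≤ m.val
        · left
          intro w hw
          have := (hmemB w).mp hw
          exact (hmemL w).mpr ⟨by omega, by omega⟩
        · by_cases hBA : B = A
          · right
            rw [hBA]
            intro w hw
            exact (hmemA w).mpr ⟨((hmemL w).mp hw).1, by have := ((hmemL w).mp hw).2; omega⟩
          · exfalso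
            have hbBs : b ∈ Bs := (hmemBs b).mpr ⟨by omega, by omega⟩
            have hbB : b ∈ B := (hmemB b).mpr ⟨habv, le_refl _⟩
            rcases nested hH hB hBsH ⟨b, Finset.mem_inter.mpr ⟨hbB, hbBs⟩⟩ with h3 | h3
            · -- B ⊆ Bs : but z ∈ B has z.val ≤ m.val < c.val
              have := (hmemBs z).mp (h3 hz.1)
              omega
            · -- Bs ⊆ B : then B ∈ D so #B ≤ #Bs, hence B = Bs, contradiction
              have hBD : B ∈ D := by
                rw [hD, Finset.mem_filter]
                exact ⟨hB, h, hBA, h3 hjBs⟩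
              have hcard := hBsmax B hBD
              have hEq : Bs = B := Finset.eq_of_subset_of_card_le h3 hcard
              rw [← hEq] at hz
              have := (hmemBs z).mp hz.1
              omega
      · -- A ⊆ B
        right
        intro w hw
        exact h ((hmemA w).mpr ⟨((hmemL w).mp hw).1, by have := ((hmemL w).mp hw).2; omega⟩)
    · -- characterization of the left part
      intro x
      rw [Finset.mem_Icc]
      simp only [Fin.le_def, hmemA x]
      constructor
      · rintro ⟨h1', h2'⟩
        exact ⟨⟨h1', by omega⟩, h2'⟩
      · rintro ⟨⟨h1', _⟩, h3'⟩
        exact ⟨h1', h3'⟩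
    · -- characterization of the right part Bs
      intro x
      rw [hmemBs x, hmemA x]
      simp only [Fin.lt_def]
      constructor
      · rintro ⟨h1', h2'⟩
        exact ⟨⟨by omega, by omega⟩, by omega⟩
      · rintro ⟨⟨h1', h2'⟩, h3'⟩
        exact ⟨by omega, by omega⟩
  · -- D empty : split off the last point j
    obtain ⟨m, hmval⟩ : ∃ m : Fin n, m.val = j.val - 1 := ⟨⟨j.val - 1, by omega⟩, rfl⟩
    have hm1 : i.val ≤ m.val := by omega
    have hm2 : m.val < j.val := by omega
    refine ⟨m, Finset.Icc i m, {j}, build m hm1 hm2 ?_, singleton_mem_Hc j,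
      ?_, ?_, (hmemA m).mpr (by omega), ⟨j, hjA, Fin.lt_def.mpr (by omega)⟩⟩
    · intro B hB hint
      obtain ⟨z, hz⟩ := Finset.nonempty_iff_ne_empty.mpr hint
      rw [Finset.mem_inter] at hz
      obtain ⟨a, b, hab, hBab⟩ := hHC B hB
      have hmemB : ∀ x : Fin n, x ∈ B ↔ a.val ≤ x.val ∧ x.val ≤ b.val := by
        intro x
        rw [hBab, Finset.mem_Icc]
        simp only [Fin.le_def]
      have habv : a.val ≤ b.val := Fin.le_def.mp hab
      have hmemL : ∀ x : Fin n, x ∈ Finset.Icc i m ↔ i.val ≤ x.val ∧ x.val ≤ m.val := by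
        intro x
        rw [Finset.mem_Icc]
        simp only [Fin.le_def]
      have hzB := (hmemB z).mp hz.1
      have hzL := (hmemL z).mp hz.2
      have hzA : z ∈ A := (hmemA z).mpr ⟨hzL.1, by omega⟩
      rcases hAc B hB with h | h | h
      · exfalso
        have : z ∈ B ∩ A := Finset.mem_inter.mpr ⟨hz.1, hzA⟩
        rw [h] at this
        exact absurd this (Finset.notMem_empty z)
      · -- B ⊆ A
        have haA := (hmemA a).mp (h ((hmemB a).mpr ⟨le_refl _, habv⟩))
        have hbA := (hmemA b).mp (h ((hmemB b).mpr ⟨habv, le_refl _⟩))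
        by_cases hb : b.val ≤ m.val
        · left
          intro w hw
          have := (hmemB w).mp hw
          exact (hmemL w).mpr ⟨by omega, by omega⟩
        · by_cases hBA : B = A
          · right
            rw [hBA]
            intro w hw
            exact (hmemA w).mpr ⟨((hmemL w).mp hw).1, by have := ((hmemL w).mp hw).2; omega⟩
          · exfalso
            apply hDne
            refine ⟨B, ?_⟩
            rw [hD, Finset.mem_filter]
            refine ⟨hB, h, hBA, (hmemB j).mpr ⟨by omega, by omega⟩⟩
      · right
        intro w hw
        exact h ((hmemA w).mpr ⟨((hmemL w).mp hw).1, by have := ((hmemL w).mp hw).2; omega⟩)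
    · intro x
      rw [Finset.mem_Icc]
      simp only [Fin.le_def, hmemA x]
      constructor
      · rintro ⟨h1', h2'⟩
        exact ⟨⟨h1', by omega⟩, h2'⟩
      · rintro ⟨⟨h1', _⟩, h3'⟩
        exact ⟨h1', h3'⟩
    · intro x
      rw [Finset.mem_singleton, hmemA x]
      simp only [Fin.lt_def]
      constructor
      · rintro rfl
        exact ⟨⟨by omega, le_refl _⟩, by omega⟩
      · rintro ⟨⟨h1', h2'⟩, h3'⟩
        apply Fin.ext
        omega


lemma splitAt_inj {H : Finset (Finset (Fin n))} (hH : IsHierarchy H)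
    {A A' : Finset (Fin n)} {m : Fin n} (hA : A ∈ Hc H) (hA' : A' ∈ Hc H)
    (h1 : SplitAt H A m) (h2 : SplitAt H A' m) : A = A' := by
  -- key: if A ⊆ A' then A' ⊆ A
  have key : ∀ X Y : Finset (Fin n), X ∈ Hc H → Y ∈ Hc H →
      SplitAt H X m → SplitAt H Y m → X ⊆ Y → Y ⊆ X := by
    intro X Y hX hY hsX hsY hXY
    obtain ⟨_, _, _, _, _, _, hmX, hxX⟩ := hsX
    obtain ⟨L, R, hL, hR, hLc, hRc, hmY, _⟩ := hsY
    have hLX : L ⊆ X := by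
      rcases hc_compat hH hX hL with h | h | h
      · exfalso
        have : m ∈ X ∩ L := Finset.mem_inter.mpr ⟨hmX, (hLc m).mpr ⟨hmY, le_refl m⟩⟩
        rw [h] at this
        exact absurd this (Finset.notMem_empty m)
      · exfalso
        obtain ⟨x, hxXmem, hmx⟩ := hxX
        have := ((hLc x).mp (h hxXmem)).2
        exact absurd hmx (not_lt_of_ge this)
      · exact h
    have hRX : R ⊆ X := by
      obtain ⟨x, hxXmem, hmx⟩ := hxX
      rcases hc_compat hH hX hR with h | h | h
      · exfalso
        have : x ∈ X ∩ R := Finset.mem_inter.mpr ⟨hxXmem, (hRc x).mpr ⟨hXY hxXmem, hmx⟩⟩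
        rw [h] at this
        exact absurd this (Finset.notMem_empty x)
      · exfalso
        have := ((hRc m).mp (h hmX)).2
        exact absurd this (lt_irrefl m)
      · exact h
    intro y hy
    rcases le_or_gt y m with h | h
    · exact hLX ((hLc y).mpr ⟨hy, h⟩)
    · exact hRX ((hRc y).mpr ⟨hy, h⟩)
  have hmA : m ∈ A := by obtain ⟨_, _, _, _, _, _, hm, _⟩ := h1; exact hm
  have hmA' : m ∈ A' := by obtain ⟨_, _, _, _, _, _, hm, _⟩ := h2; exact hm
  rcases hc_compat hH hA hA' with h | h | h
  · exfalso
    have : m ∈ A ∩ A' := Finset.mem_inter.mpr ⟨hmA, hmA'⟩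
    rw [h] at this
    exact absurd this (Finset.notMem_empty m)
  · exact Finset.Subset.antisymm h (key A A' hA hA' h1 h2 h)
  · exact (Finset.Subset.antisymm h (key A' A hA' hA h2 h1 h)).symm

lemma card_Hc [NeZero n] {H : Finset (Finset (Fin n))} (hHC : ∀ S ∈ H, IsIntv S)
    (hH : IsHierarchy H) : (Hc H).card = 2 * n - 1 := by
  classical
  have hn : 1 ≤ n := Nat.one_le_iff_ne_zero.mpr (NeZero.ne n)
  have hpos : ∀ S ∈ Hc H, 1 ≤ S.card := by
    intro S hS
    exact Finset.Nonempty.card_pos (isIntv_nonempty (mem_Hc.mp hS).1)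
  -- leaves
  have hleaves : (Hc H).filter (fun S => S.card = 1) =
      Finset.univ.image (fun x : Fin n => ({x} : Finset (Fin n))) := by
    ext S
    rw [Finset.mem_filter, Finset.mem_image]
    constructor
    · rintro ⟨hS, hc⟩
      obtain ⟨x, rfl⟩ := Finset.card_eq_one.mp hc
      exact ⟨x, Finset.mem_univ x, rfl⟩
    · rintro ⟨x, _, rfl⟩
      exact ⟨singleton_mem_Hc x, Finset.card_singleton x⟩
  have hleafcard : ((Hc H).filter (fun S => S.card = 1)).card = n := by
    rw [hleaves, Finset.card_image_of_injective _ Finset.singleton_injective,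
      Finset.card_univ, Fintype.card_fin]
  -- internal nodes
  have hsplit : ∀ A ∈ (Hc H).filter (fun S => ¬ S.card = 1), ∃ m : Fin n, SplitAt H A m := by
    intro A hA
    rw [Finset.mem_filter] at hA
    exact exists_split hHC hH hA.1 (by have := hpos A hA.1; omega)
  have hintcard : ((Hc H).filter (fun S => ¬ S.card = 1)).card = n - 1 := by
    rw [← Finset.card_range (n - 1)]
    refine Finset.card_bij (fun A hA => (Classical.choose (hsplit A hA)).val) ?_ ?_ ?_
    · -- maps into range (n-1)
      intro A hA
      show (Classical.choose (hsplit A hA)).val ∈ Finset.range (n - 1)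
      have hspec := Classical.choose_spec (hsplit A hA)
      obtain ⟨_, _, _, _, _, _, _, x, _, hmx⟩ := hspec
      rw [Finset.mem_range]
      have h1 := Fin.lt_def.mp hmx
      have h2 := x.isLt
      omega
    · -- injective
      intro A hA A' hA' hEq
      have hspec := Classical.choose_spec (hsplit A hA)
      have hspec' := Classical.choose_spec (hsplit A' hA')
      have : Classical.choose (hsplit A hA) = Classical.choose (hsplit A' hA') :=
        Fin.ext hEq
      rw [this] at hspec
      rw [Finset.mem_filter] at hA hA'
      exact splitAt_inj hH hA.1 hA'.1 hspec hspec'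
    · -- surjective
      intro mv hmv
      rw [Finset.mem_range] at hmv
      obtain ⟨m, hmval⟩ : ∃ m : Fin n, m.val = mv := ⟨⟨mv, by omega⟩, rfl⟩
      obtain ⟨m1, hm1val⟩ : ∃ m1 : Fin n, m1.val = mv + 1 := ⟨⟨mv + 1, by omega⟩, rfl⟩
      set G : Finset (Finset (Fin n)) := (Hc H).filter (fun A => m ∈ A ∧ m1 ∈ A) with hG
      have hGne : G.Nonempty := ⟨Finset.univ, by
        rw [hG, Finset.mem_filter]
        exact ⟨univ_mem_Hc, Finset.mem_univ m, Finset.mem_univ m1⟩⟩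
      obtain ⟨A₀, hA₀G, hA₀min⟩ := G.exists_min_image Finset.card hGne
      rw [hG, Finset.mem_filter] at hA₀G
      obtain ⟨hA₀Hc, hmA₀, hm1A₀⟩ := hA₀G
      have hcard2 : 2 ≤ A₀.card := by
        have hsub : ({m, m1} : Finset (Fin n)) ⊆ A₀ := by
          intro y hy
          rw [Finset.mem_insert, Finset.mem_singleton] at hy
          rcases hy with rfl | rfl
          · exact hmA₀
          · exact hm1A₀
        have hne : m ≠ m1 := by
          intro h
          have := congrArg Fin.val h
          omega
        calc 2 = ({m, m1} : Finset (Fin n)).card := (Finset.card_pair hne).symm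
          _ ≤ A₀.card := Finset.card_le_card hsub
      have hA₀I : A₀ ∈ (Hc H).filter (fun S => ¬ S.card = 1) := by
        rw [Finset.mem_filter]
        exact ⟨hA₀Hc, by omega⟩
      refine ⟨A₀, hA₀I, ?_⟩
      -- the chosen split point of A₀ must be m
      show (Classical.choose (hsplit A₀ hA₀I)).val = mv
      have hspec := Classical.choose_spec (hsplit A₀ hA₀I)
      set m' := Classical.choose (hsplit A₀ hA₀I) with hm'
      obtain ⟨L, R, hL, hR, hLc, hRc, hm'A₀, hxA₀⟩ := hspec
      have hL₀sub : L ⊆ A₀ := fun y hy => ((hLc y).mp hy).1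
      have hR₀sub : R ⊆ A₀ := fun y hy => ((hRc y).mp hy).1
      by_cases hcase : mv + 1 ≤ m'.val
      · -- both m, m1 in L, contradicting minimality
        exfalso
        have hmL : m ∈ L := (hLc m).mpr ⟨hmA₀, Fin.le_def.mpr (by omega)⟩
        have hm1L : m1 ∈ L := (hLc m1).mpr ⟨hm1A₀, Fin.le_def.mpr (by omega)⟩
        have hLG : L ∈ G := by
          rw [hG, Finset.mem_filter]
          exact ⟨hL, hmL, hm1L⟩
        have hmin := hA₀min L hLG
        obtain ⟨x, hxA, hmx⟩ := hxA₀
        have hxnL : x ∉ L := by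
          intro hc
          have := ((hLc x).mp hc).2
          exact absurd hmx (not_lt_of_ge this)
        have : L ⊂ A₀ := Finset.ssubset_iff_of_subset hL₀sub |>.mpr ⟨x, hxA, hxnL⟩
        have := Finset.card_lt_card this
        omega
      · by_cases hcase2 : m'.val < mv
        · -- both m, m1 in R
          exfalso
          have hmR : m ∈ R := (hRc m).mpr ⟨hmA₀, Fin.lt_def.mpr (by omega)⟩
          have hm1R : m1 ∈ R := (hRc m1).mpr ⟨hm1A₀, Fin.lt_def.mpr (by omega)⟩
          have hRG : R ∈ G := by
            rw [hG, Finset.mem_filter]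
            exact ⟨hR, hmR, hm1R⟩
          have hmin := hA₀min R hRG
          have hm'nR : m' ∉ R := by
            intro hc
            exact absurd ((hRc m').mp hc).2 (lt_irrefl m')
          have : R ⊂ A₀ := Finset.ssubset_iff_of_subset hR₀sub |>.mpr ⟨m', hm'A₀, hm'nR⟩
          have := Finset.card_lt_card this
          omega
        · omega
  have hdecomp := Finset.card_filter_add_card_filter_not
    (s := Hc H) (p := fun S => S.card = 1)
  rw [hleafcard, hintcard] at hdecomp
  omega

theorem main_thm [NeZero n] {H : Finset (Finset (Fin n))} (hHC : ∀ S ∈ H, IsIntv S)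
    (hH : IsHierarchy H) :
    H ⊆ Hc H ∧ (∀ S ∈ Hc H, IsIntv S) ∧ IsHierarchy (Hc H) ∧ (Hc H).card = 2 * n - 1 := by
  refine ⟨fun S hS => mem_Hc_of_mem hHC hH hS, fun S hS => (mem_Hc.mp hS).1, ⟨?_, univ_mem_Hc, ?_⟩,
    card_Hc hHC hH⟩
  · intro hc
    exact absurd (isIntv_nonempty (mem_Hc.mp hc).1) Finset.not_nonempty_empty
  · intro A hA B hB
    rcases hc_compat hH hA hB with h | h | h
    · exact Or.inl h
    · exact Or.inr (Or.inl (Finset.inter_eq_left.mpr h))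
    · exact Or.inr (Or.inr (Finset.inter_eq_right.mpr h))

end BurAux

/-- The collection of all intervals of `{1,…,n}` (represented by `Fin n`) is
bureaucratic. -/
theorem intervals_bureaucratic (n : ℕ) (hn : 1 ≤ n) :
    IsBureaucratic {S : Finset (Fin n) | ∃ i j : Fin n, i ≤ j ∧ S = Finset.Icc i j} := by
  haveI : NeZero n := ⟨by omega⟩
  refine ⟨⟨Finset.Icc 0 0, 0, 0, le_refl 0, rfl⟩, ?_, ?_⟩
  · rintro ⟨i, j, hij, hEq⟩
    have : (Finset.Icc i j).Nonempty := Finset.nonempty_Icc.mpr hij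
    rw [← hEq] at this
    exact absurd this Finset.not_nonempty_empty
  · intro H hsub hH
    have hHC : ∀ S ∈ H, BurAux.IsIntv S := fun S hS => hsub (Finset.mem_coe.mpr hS)
    obtain ⟨h1, h2, h3, h4⟩ := BurAux.main_thm hHC hH
    refine ⟨BurAux.Hc H, h1, fun S hS => h2 S (Finset.mem_coe.mp hS), h3, ?_⟩
    rw [h4, Fintype.card_fin]
end

section
/- Let k ≥ 2 and let I₁, …, I_k be pairwise disjoint nonempty intervals of {1, …, n} whose union I₁ ∪ ⋯ ∪ I_k is again an interval of {1, …, n}. Then there exist distinct indices i, j such that I_i ∪ I_j is an interval of {1, …, n}. -/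
/-- An interval of `{1,…,n}` (represented by `Fin n`): a set `[i,j] = {k : i ≤ k ≤ j}`. -/
def IsInterval {n : ℕ} (S : Finset (Fin n)) : Prop :=
  ∃ i j : Fin n, i ≤ j ∧ S = Finset.Icc i j

/-- If at least two pairwise disjoint nonempty intervals of `{1,…,n}` have union an
interval, then two of them have union an interval. -/
theorem exists_union_isInterval {n k : ℕ} (hk : 2 ≤ k) (f : Fin k → Finset (Fin n))
    (hint : ∀ i, IsInterval (f i)) (hne : ∀ i, (f i).Nonempty)
    (hdisj : ∀ i j : Fin k, i ≠ j → Disjoint (f i) (f j))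
    (hu : IsInterval (Finset.univ.sup f)) :
    ∃ i j : Fin k, i ≠ j ∧ IsInterval (f i ∪ f j) := by
  obtain ⟨A, B, hAB, hU⟩ := hu
  choose a b hab hf using hint
  have hsub : ∀ i, f i ⊆ Finset.Icc A B := by
    intro i
    intro x hx
    rw [← hU]
    exact Finset.mem_sup.2 ⟨i, Finset.mem_univ i, hx⟩
  -- find interval containing A
  have hAmem : A ∈ Finset.univ.sup f := by
    rw [hU]; exact Finset.mem_Icc.2 ⟨le_refl A, hAB⟩
  obtain ⟨i₀, -, hi₀⟩ := Finset.mem_sup.1 hAmem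
  have hai₀ : a i₀ = A := by
    have h1 : a i₀ ≤ A := (Finset.mem_Icc.1 (by rwa [hf i₀] at hi₀)).1
    have h2 : A ≤ a i₀ := by
      have : a i₀ ∈ Finset.Icc A B :=
        hsub i₀ (by rw [hf i₀]; exact Finset.mem_Icc.2 ⟨le_refl _, hab i₀⟩)
      exact (Finset.mem_Icc.1 this).1
    exact le_antisymm h1 h2
  have hbB : (b i₀ : ℕ) < (B : ℕ) := by
    by_contra h
    push_neg at h
    -- then f i₀ ⊇ Icc A B ⊇ f j for j ≠ i₀, contradiction with disjointness
    haveI : Nontrivial (Fin k) := Fin.nontrivial_iff_two_le.2 hk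
    obtain ⟨j, hj⟩ := exists_ne i₀
    obtain ⟨x, hx⟩ := hne j
    have hx2 : x ∈ f i₀ := by
      have hxI : x ∈ Finset.Icc A B := hsub j hx
      rw [hf i₀]
      refine Finset.mem_Icc.2 ⟨?_, ?_⟩
      · rw [hai₀]; exact (Finset.mem_Icc.1 hxI).1
      · have := (Finset.mem_Icc.1 hxI).2
        exact le_trans this (by exact_mod_cast h)
    exact Finset.disjoint_left.1 (hdisj j i₀ hj) hx hx2
  have hBn : (B : ℕ) < n := B.isLt
  set c : Fin n := ⟨(b i₀ : ℕ) + 1, by omega⟩ with hc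
  have hcmem : c ∈ Finset.univ.sup f := by
    rw [hU]
    refine Finset.mem_Icc.2 ⟨?_, ?_⟩
    · have : A ≤ b i₀ := hai₀ ▸ hab i₀
      exact Fin.le_def.2 (by have := Fin.le_def.1 this; simp [hc]; omega)
    · exact Fin.le_def.2 (by simp [hc]; omega)
  obtain ⟨j, -, hj⟩ := Finset.mem_sup.1 hcmem
  have hji₀ : j ≠ i₀ := by
    intro h
    rw [h, hf i₀] at hj
    have := (Finset.mem_Icc.1 hj).2
    have := Fin.le_def.1 this
    simp [hc] at this
  have haj : (a j : ℕ) = (b i₀ : ℕ) + 1 := by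
    have h1 : a j ≤ c := (Finset.mem_Icc.1 (by rwa [hf j] at hj)).1
    have h1' : (a j : ℕ) ≤ (b i₀ : ℕ) + 1 := by simpa [hc] using Fin.le_def.1 h1
    by_contra h
    have h2 : (a j : ℕ) ≤ (b i₀ : ℕ) := by omega
    have h3 : a j ∈ f i₀ := by
      rw [hf i₀]
      refine Finset.mem_Icc.2 ⟨?_, Fin.le_def.2 h2⟩
      rw [hai₀]
      have : a j ∈ Finset.Icc A B :=
        hsub j (by rw [hf j]; exact Finset.mem_Icc.2 ⟨le_refl _, hab j⟩)
      exact (Finset.mem_Icc.1 this).1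
    have h4 : a j ∈ f j := by
      rw [hf j]; exact Finset.mem_Icc.2 ⟨le_refl _, hab j⟩
    exact Finset.disjoint_left.1 (hdisj j i₀ hji₀) h4 h3
  refine ⟨i₀, j, Ne.symm hji₀, ⟨A, b j, ?_, ?_⟩⟩
  · have h1 : (A : ℕ) ≤ (b i₀ : ℕ) := Fin.le_def.1 (hai₀ ▸ hab i₀)
    have h2 : (a j : ℕ) ≤ (b j : ℕ) := Fin.le_def.1 (hab j)
    exact Fin.le_def.2 (by omega)
  · ext x
    have hA : (a i₀ : ℕ) = (A : ℕ) := by rw [hai₀]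
    have h1 : (a i₀ : ℕ) ≤ (b i₀ : ℕ) := Fin.le_def.1 (hab i₀)
    have h2 : (a j : ℕ) ≤ (b j : ℕ) := Fin.le_def.1 (hab j)
    simp only [Finset.mem_union, hf, Finset.mem_Icc, Fin.le_def]
    omega
end

section
/- Let X be a finite nonempty set and let H₀ be a hierarchy on X that contains all trivial clusters of X. Then the collection C = {C ⊆ X : C ≠ ∅ and for every C' ∈ H₀, C ∩ C' ∈ {∅, C, C'}} of all nonempty subsets of X compatible with every member of H₀ is bureaucratic. -/
section Aux

variable {α : Type*} [Fintype α] [DecidableEq α]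

lemma ssub_or_eq {β : Type*} {s t : Finset β} (h : s ⊆ t) : s ⊂ t ∨ s = t := by
  rcases eq_or_lt_of_le (Finset.le_iff_subset.mpr h) with h' | h'
  · exact Or.inr h'
  · exact Or.inl (Finset.lt_iff_ssubset.mp h')

/-- Compatibility of two clusters. -/
def Compat (A B : Finset α) : Prop := A ∩ B = ∅ ∨ A ∩ B = A ∨ A ∩ B = B

lemma compat_symm {A B : Finset α} (h : Compat A B) : Compat B A := by
  unfold Compat at *
  rw [Finset.inter_comm] at h
  rcases h with h | h | h
  · exact Or.inl h
  · exact Or.inr (Or.inr h)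
  · exact Or.inr (Or.inl h)

lemma hier_compat {K : Finset (Finset α)} (hK : IsHierarchy K) {A B : Finset α}
    (hA : A ∈ K) (hB : B ∈ K) : Compat A B := hK.2.2 A hA B hB

lemma hier_nonempty {K : Finset (Finset α)} (hK : IsHierarchy K) {A : Finset α}
    (hA : A ∈ K) : A.Nonempty := by
  rw [Finset.nonempty_iff_ne_empty]
  rintro rfl; exact hK.1 hA

lemma compat_cases {A B : Finset α} (h : Compat A B) (hne : (A ∩ B).Nonempty) :
    A ⊆ B ∨ B ⊆ A := by
  rcases h with h | h | h
  · rw [h] at hne; exact absurd hne (by simp)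
  · exact Or.inl (Finset.inter_eq_left.mp h)
  · exact Or.inr (Finset.inter_eq_right.mp h)

lemma hier_chain {K : Finset (Finset α)} (hK : IsHierarchy K) {A B : Finset α}
    (hA : A ∈ K) (hB : B ∈ K) (hne : (A ∩ B).Nonempty) : A ⊆ B ∨ B ⊆ A :=
  compat_cases (hier_compat hK hA hB) hne

/-- `D` is the least strict superset of `A` within `K`. -/
def IsChild (K : Finset (Finset α)) (A D : Finset α) : Prop :=
  A ∈ K ∧ A ⊂ D ∧ ∀ E ∈ K, A ⊂ E → D ⊆ E

lemma exists_least_superset {K : Finset (Finset α)} (hK : IsHierarchy K) {A : Finset α}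
    (hA : A ∈ K) (hAu : A ≠ Finset.univ) :
    ∃ D, D ∈ K ∧ A ⊂ D ∧ ∀ E ∈ K, A ⊂ E → D ⊆ E := by
  classical
  set S := K.filter (fun D => A ⊂ D) with hS
  have hSne : S.Nonempty := by
    refine ⟨Finset.univ, ?_⟩
    simp only [hS, Finset.mem_filter]
    exact ⟨hK.2.1, Finset.ssubset_iff_subset_ne.mpr ⟨Finset.subset_univ A, hAu⟩⟩
  obtain ⟨D, hDS, hDmin⟩ := S.exists_minimal hSne
  simp only [hS, Finset.mem_filter] at hDS
  refine ⟨D, hDS.1, hDS.2, ?_⟩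
  intro E hE hAE
  have hES : E ∈ S := by simp only [hS, Finset.mem_filter]; exact ⟨hE, hAE⟩
  have hne : (D ∩ E).Nonempty := by
    obtain ⟨x, hx⟩ := hier_nonempty hK hA
    exact ⟨x, Finset.mem_inter.mpr ⟨hDS.2.subset hx, hAE.subset hx⟩⟩
  rcases hier_chain hK hDS.1 hE hne with h | h
  · exact h
  · rcases ssub_or_eq h with h' | h'
    · exact absurd (hDmin hES h'.le) h'.not_subset
    · exact h' ▸ Finset.Subset.refl D

lemma child_disjoint {K : Finset (Finset α)} (hK : IsHierarchy K) {A A' D : Finset α}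
    (h : IsChild K A D) (h' : IsChild K A' D) (hne : A ≠ A') : A ∩ A' = ∅ := by
  by_contra hc
  have hn : (A ∩ A').Nonempty := Finset.nonempty_iff_ne_empty.mpr hc
  rcases hier_chain hK h.1 h'.1 hn with hsub | hsub
  · have hss : A ⊂ A' := Finset.ssubset_iff_subset_ne.mpr ⟨hsub, hne⟩
    exact absurd (h.2.2 A' h'.1 hss) h'.2.1.not_subset
  · have hss : A' ⊂ A := Finset.ssubset_iff_subset_ne.mpr ⟨hsub, hne.symm⟩
    exact absurd (h'.2.2 A h.1 hss) h.2.1.not_subset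

/-- Main counting lemma: upper bound on the size of a hierarchy containing all
singletons, and existence of a node with at least 3 children when not maximum. -/
lemma counting [Nonempty α] {K : Finset (Finset α)} (hK : IsHierarchy K)
    (hs : ∀ x : α, {x} ∈ K) :
    K.card ≤ 2 * Fintype.card α - 1 ∧
    (K.card < 2 * Fintype.card α - 1 →
      ∃ D, D ∈ K ∧ ∃ A₁ A₂ A₃, A₁ ≠ A₂ ∧ A₁ ≠ A₃ ∧ A₂ ≠ A₃ ∧
        IsChild K A₁ D ∧ IsChild K A₂ D ∧ IsChild K A₃ D) := by
  classical
  set n := Fintype.card α with hn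
  -- parent function
  let f : Finset α → Finset α := fun A =>
    if h : ∃ D, D ∈ K ∧ A ⊂ D ∧ ∀ E ∈ K, A ⊂ E → D ⊆ E then h.choose else ∅
  have hf : ∀ A ∈ K.erase Finset.univ, IsChild K A (f A) := by
    intro A hA
    rw [Finset.mem_erase] at hA
    have h := exists_least_superset hK hA.2 hA.1
    have hfa : f A = h.choose := dif_pos h
    rw [hfa]
    obtain ⟨h1, h2, h3⟩ := h.choose_spec
    exact ⟨hA.2, h2, h3⟩
  have hfmem : ∀ A ∈ K.erase Finset.univ, f A ∈ K := by
    intro A hA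
    rw [Finset.mem_erase] at hA
    have h := exists_least_superset hK hA.2 hA.1
    have hfa : f A = h.choose := dif_pos h
    rw [hfa]; exact h.choose_spec.1
  -- fiberwise count
  have hcount : (K.erase Finset.univ).card =
      ∑ D ∈ K, ((K.erase Finset.univ).filter (fun A => f A = D)).card :=
    Finset.card_eq_sum_card_fiberwise hfmem
  -- the small sets of K are exactly the singletons
  have hsmall : K.filter (fun D => ¬ 2 ≤ D.card)
      = Finset.univ.image (fun x : α => ({x} : Finset α)) := by
    ext D
    simp only [Finset.mem_filter, Finset.mem_image, Finset.mem_univ, true_and]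
    constructor
    · rintro ⟨hD, hc⟩
      have h1 : D.card = 1 := by
        have := (hier_nonempty hK hD).card_pos
        omega
      obtain ⟨x, hx⟩ := Finset.card_eq_one.mp h1
      exact ⟨x, hx.symm⟩
    · rintro ⟨x, rfl⟩
      exact ⟨hs x, by simp⟩
  have hsmallcard : (K.filter (fun D => ¬ 2 ≤ D.card)).card = n := by
    rw [hsmall, Finset.card_image_of_injective _ Finset.singleton_injective,
      Finset.card_univ]
  have hsplit := Finset.card_filter_add_card_filter_not
    (s := K) (p := fun D => 2 ≤ D.card)
  -- fibers over small sets are empty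
  have hfib0 : ∀ D ∈ K, ¬ 2 ≤ D.card →
      ((K.erase Finset.univ).filter (fun A => f A = D)).card = 0 := by
    intro D hD hc
    rw [Finset.card_eq_zero, Finset.filter_eq_empty_iff]
    intro A hA hfA
    have hch := hf A hA
    rw [hfA] at hch
    have h1 : 1 ≤ A.card := (hier_nonempty hK hch.1).card_pos
    have h2 : A.card < D.card := Finset.card_lt_card hch.2.1
    omega
  -- every element of a nonsingleton lies in a child of it
  have hchild_of : ∀ D ∈ K, 2 ≤ D.card → ∀ x ∈ D,
      ∃ A, x ∈ A ∧ A ∈ (K.erase Finset.univ).filter (fun A => f A = D) := by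
    intro D hD hc x hx
    set T := K.filter (fun A => x ∈ A ∧ A ⊂ D) with hT
    have hxT : ({x} : Finset α) ∈ T := by
      simp only [hT, Finset.mem_filter]
      refine ⟨hs x, Finset.mem_singleton_self x, ?_⟩
      refine Finset.ssubset_iff_subset_ne.mpr ⟨Finset.singleton_subset_iff.mpr hx, ?_⟩
      intro h
      rw [← h] at hc
      simp at hc
    obtain ⟨A, hAT, hAmax⟩ := T.exists_maximal ⟨_, hxT⟩
    simp only [hT, Finset.mem_filter] at hAT
    obtain ⟨hAK, hxA, hAD⟩ := hAT
    have hAe : A ∈ K.erase Finset.univ := by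
      rw [Finset.mem_erase]
      refine ⟨fun h => ?_, hAK⟩
      subst h
      exact absurd (Finset.subset_univ D) hAD.not_subset
    have hch := hf A hAe
    have hsub : f A ⊆ D := hch.2.2 D hD hAD
    have hfAD : f A = D := by
      by_contra hne
      have hss : f A ⊂ D := Finset.ssubset_iff_subset_ne.mpr ⟨hsub, hne⟩
      have hfT : f A ∈ T := by
        simp only [hT, Finset.mem_filter]
        exact ⟨hfmem A hAe, hch.2.1.subset hxA, hss⟩
      exact hch.2.1.not_subset (hAmax hfT hch.2.1.subset)
    refine ⟨A, hxA, ?_⟩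
    simp only [Finset.mem_filter]
    exact ⟨hAe, hfAD⟩
  have hfib2 : ∀ D ∈ K, 2 ≤ D.card →
      2 ≤ ((K.erase Finset.univ).filter (fun A => f A = D)).card := by
    intro D hD hc
    obtain ⟨x, hxD⟩ := Finset.card_pos.mp (show 0 < D.card by omega)
    obtain ⟨A, hxA, hA⟩ := hchild_of D hD hc x hxD
    have hAch : IsChild K A D := by
      simp only [Finset.mem_filter] at hA
      have := hf A hA.1
      rwa [hA.2] at this
    obtain ⟨y, hyD, hyA⟩ : ∃ y ∈ D, y ∉ A := by
      by_contra h
      push_neg at h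
      exact hAch.2.1.2 h
    obtain ⟨A', hyA', hA'⟩ := hchild_of D hD hc y hyD
    exact Finset.one_lt_card.mpr ⟨A, hA, A', hA', fun h => hyA (h ▸ hyA')⟩
  have hNk : (K.filter (fun D => 2 ≤ D.card)).card + n = K.card := by
    rw [← hsmallcard]; exact hsplit
  have hku : 1 ≤ K.card := Finset.card_pos.mpr ⟨_, hK.2.1⟩
  have herase : (K.erase Finset.univ).card = K.card - 1 :=
    Finset.card_erase_of_mem hK.2.1
  have hsum_split : ∑ D ∈ K, ((K.erase Finset.univ).filter (fun A => f A = D)).card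
      = ∑ D ∈ K.filter (fun D => 2 ≤ D.card),
          ((K.erase Finset.univ).filter (fun A => f A = D)).card := by
    rw [← Finset.sum_filter_add_sum_filter_not K (fun D => 2 ≤ D.card)]
    have hz : ∑ D ∈ K.filter (fun D => ¬ 2 ≤ D.card),
        ((K.erase Finset.univ).filter (fun A => f A = D)).card = 0 := by
      apply Finset.sum_eq_zero
      intro D hD
      rw [Finset.mem_filter] at hD
      exact hfib0 D hD.1 hD.2
    omega
  have hlower : 2 * (K.filter (fun D => 2 ≤ D.card)).card ≤ K.card - 1 := by
    rw [← herase, hcount, hsum_split]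
    calc 2 * (K.filter (fun D => 2 ≤ D.card)).card
        = ∑ _D ∈ K.filter (fun D => 2 ≤ D.card), 2 := by
          rw [Finset.sum_const, smul_eq_mul, mul_comm]
      _ ≤ _ := by
          apply Finset.sum_le_sum
          intro D hD
          rw [Finset.mem_filter] at hD
          exact hfib2 D hD.1 hD.2
  have hn1 : 1 ≤ n := Fintype.card_pos
  constructor
  · omega
  · intro hlt
    by_contra hno
    push_neg at hno
    have hfible : ∀ D ∈ K, ((K.erase Finset.univ).filter (fun A => f A = D)).card ≤ 2 := by
      intro D hD
      by_contra hc
      push_neg at hc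
      obtain ⟨A₁, A₂, A₃, h1, h2, h3, h12, h13, h23⟩ := Finset.two_lt_card_iff.mp hc
      simp only [Finset.mem_filter] at h1 h2 h3
      exact hno D hD A₁ A₂ A₃ h12 h13 h23 (h1.2 ▸ hf A₁ h1.1) (h2.2 ▸ hf A₂ h2.1)
        (h3.2 ▸ hf A₃ h3.1)
    have hupper : K.card - 1 ≤ 2 * (K.filter (fun D => 2 ≤ D.card)).card := by
      rw [← herase, hcount, hsum_split]
      calc ∑ D ∈ K.filter (fun D => 2 ≤ D.card),
            ((K.erase Finset.univ).filter (fun A => f A = D)).card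
          ≤ ∑ _D ∈ K.filter (fun D => 2 ≤ D.card), 2 := by
            apply Finset.sum_le_sum
            intro D hD
            rw [Finset.mem_filter] at hD
            exact hfible D hD.1
        _ = 2 * (K.filter (fun D => 2 ≤ D.card)).card := by
            rw [Finset.sum_const, smul_eq_mul, mul_comm]
    omega

/-- If a hierarchy containing all singletons is not maximum, a new cluster
compatible with every member can be added. -/
lemma exists_addable [Nonempty α] {K : Finset (Finset α)} (hK : IsHierarchy K)
    (hs : ∀ x : α, {x} ∈ K) (hlt : K.card < 2 * Fintype.card α - 1) :
    ∃ B, B ∉ K ∧ B ≠ ∅ ∧ ∀ E ∈ K, Compat B E := by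
  obtain ⟨D, hDK, A₁, A₂, A₃, h12, h13, h23, c1, c2, c3⟩ := (counting hK hs).2 hlt
  have hd12 : A₁ ∩ A₂ = ∅ := child_disjoint hK c1 c2 h12
  have hd13 : A₁ ∩ A₃ = ∅ := child_disjoint hK c1 c3 h13
  have hd23 : A₂ ∩ A₃ = ∅ := child_disjoint hK c2 c3 h23
  have hA1ne := hier_nonempty hK c1.1
  have hA2ne := hier_nonempty hK c2.1
  have hA3ne := hier_nonempty hK c3.1
  set B := A₁ ∪ A₂ with hB
  have hA1B : A₁ ⊂ B := by
    rw [Finset.ssubset_iff_subset_ne]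
    refine ⟨Finset.subset_union_left, fun h => ?_⟩
    obtain ⟨y, hy⟩ := hA2ne
    have hym : y ∈ A₁ ∩ A₂ :=
      Finset.mem_inter.mpr ⟨(h ▸ Finset.mem_union_right A₁ hy : y ∈ A₁), hy⟩
    rw [hd12] at hym; exact absurd hym (by simp)
  have hBD : B ⊆ D := Finset.union_subset c1.2.1.subset c2.2.1.subset
  have hBnotK : B ∉ K := by
    intro hBK
    have hDB : D ⊆ B := c1.2.2 B hBK hA1B
    obtain ⟨z, hz⟩ := hA3ne
    have hzD : z ∈ D := c3.2.1.subset hz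
    rcases Finset.mem_union.mp (hDB hzD) with h | h
    · have hzm : z ∈ A₁ ∩ A₃ := Finset.mem_inter.mpr ⟨h, hz⟩
      rw [hd13] at hzm; exact absurd hzm (by simp)
    · have hzm : z ∈ A₂ ∩ A₃ := Finset.mem_inter.mpr ⟨h, hz⟩
      rw [hd23] at hzm; exact absurd hzm (by simp)
  have hBne : B ≠ ∅ :=
    Finset.nonempty_iff_ne_empty.mp (hA1ne.mono Finset.subset_union_left)
  refine ⟨B, hBnotK, hBne, ?_⟩
  intro E hE
  have hsubB : ∀ {X : Finset α}, X ⊆ B → Compat B E → True := fun _ _ => trivial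
  rcases hier_compat hK hE hDK with hED | hED | hED
  · -- E ∩ D = ∅
    left
    rw [← Finset.subset_empty, ← hED]
    intro x hx
    rw [Finset.mem_inter] at hx ⊢
    exact ⟨hx.2, hBD hx.1⟩
  · -- E ⊆ D
    have hEsubD : E ⊆ D := Finset.inter_eq_left.mp hED
    rcases ssub_or_eq hEsubD with hEss | rfl
    · -- E ⊊ D : compare E with A₁ and A₂
      rcases hier_compat hK hE c1.1 with h1 | h1 | h1
      · rcases hier_compat hK hE c2.1 with h2 | h2 | h2
        · -- disjoint from both
          left
          rw [hB, Finset.union_inter_distrib_right, Finset.inter_comm A₁ E,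
            Finset.inter_comm A₂ E, h1, h2, Finset.union_empty]
        · -- E ⊆ A₂
          right; right
          exact Finset.inter_eq_right.mpr ((Finset.inter_eq_left.mp h2).trans
            Finset.subset_union_right)
        · -- A₂ ⊆ E
          have hA2E : A₂ ⊆ E := Finset.inter_eq_right.mp h2
          rcases ssub_or_eq hA2E with hss | rfl
          · exact absurd (c2.2.2 E hE hss) hEss.not_subset
          · right; right
            exact Finset.inter_eq_right.mpr Finset.subset_union_right
      · -- E ⊆ A₁
        right; right
        exact Finset.inter_eq_right.mpr ((Finset.inter_eq_left.mp h1).trans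
          Finset.subset_union_left)
      · -- A₁ ⊆ E
        have hA1E : A₁ ⊆ E := Finset.inter_eq_right.mp h1
        rcases ssub_or_eq hA1E with hss | rfl
        · exact absurd (c1.2.2 E hE hss) hEss.not_subset
        · right; right
          exact Finset.inter_eq_right.mpr Finset.subset_union_left
    · -- E = D
      right; left
      exact Finset.inter_eq_left.mpr hBD
  · -- D ⊆ E
    right; left
    exact Finset.inter_eq_left.mpr (hBD.trans (Finset.inter_eq_right.mp hED))

lemma extend [Nonempty α] : ∀ (m : ℕ) (K : Finset (Finset α)), IsHierarchy K →
    (∀ x : α, {x} ∈ K) → 2 * Fintype.card α - 1 - K.card ≤ m →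
    ∃ K', K ⊆ K' ∧ IsHierarchy K' ∧ K'.card = 2 * Fintype.card α - 1 := by
  intro m
  induction m with
  | zero =>
    intro K hK hs hm
    exact ⟨K, Finset.Subset.refl K, hK, le_antisymm (counting hK hs).1 (by omega)⟩
  | succ m ih =>
    intro K hK hs hm
    by_cases hlt : K.card < 2 * Fintype.card α - 1
    · obtain ⟨B, hBK, hBne, hBc⟩ := exists_addable hK hs hlt
      have hK' : IsHierarchy (insert B K) := by
        refine ⟨?_, Finset.mem_insert_of_mem hK.2.1, ?_⟩
        · rw [Finset.mem_insert]
          rintro (h | h)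
          · exact hBne h.symm
          · exact hK.1 h
        · intro A hA B' hB'
          rw [Finset.mem_insert] at hA hB'
          rcases hA with rfl | hA
          · rcases hB' with rfl | hB'
            · exact Or.inr (Or.inl (Finset.inter_self _))
            · exact hBc B' hB'
          · rcases hB' with rfl | hB'
            · exact compat_symm (hBc A hA)
            · exact hK.2.2 A hA B' hB'
      obtain ⟨K', h1, h2, h3⟩ := ih (insert B K) hK'
        (fun x => Finset.mem_insert_of_mem (hs x))
        (by rw [Finset.card_insert_of_notMem hBK]; omega)
      exact ⟨K', (Finset.subset_insert B K).trans h1, h2, h3⟩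
    · exact ⟨K, Finset.Subset.refl K, hK, le_antisymm (counting hK hs).1 (by omega)⟩

end Aux

/-- The collection of all nonempty subsets of `X` compatible with every cluster of a
hierarchy `H₀` (which contains all trivial clusters) is bureaucratic. -/
theorem compatible_bureaucratic {α : Type*} [Fintype α] [DecidableEq α] [Nonempty α]
    (H₀ : Finset (Finset α)) (hH₀ : IsHierarchy H₀)
    (hsing : ∀ x : α, {x} ∈ H₀) (huniv : Finset.univ ∈ H₀) :
    IsBureaucratic {C : Finset α | C ≠ ∅ ∧
      ∀ C' ∈ H₀, C ∩ C' = ∅ ∨ C ∩ C' = C ∨ C ∩ C' = C'} := by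
  classical
  refine ⟨?_, ?_, ?_⟩
  · -- nonempty: a singleton works
    obtain ⟨x⟩ := ‹Nonempty α›
    refine ⟨{x}, ?_, ?_⟩
    · exact Finset.singleton_ne_empty x
    · intro C' hC'
      by_cases hx : x ∈ C'
      · exact Or.inr (Or.inl (Finset.singleton_inter_of_mem hx))
      · exact Or.inl (Finset.singleton_inter_of_notMem hx)
  · -- ∅ not in C
    intro h
    exact h.1 rfl
  · -- extension
    intro H hHC hH
    set K := H ∪ H₀ with hKdef
    have hKh : IsHierarchy K := by
      refine ⟨?_, Finset.mem_union_right H huniv, ?_⟩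
      · rw [hKdef, Finset.mem_union]
        rintro (h | h)
        · exact (hHC (Finset.mem_coe.mpr h)).1 rfl
        · exact hH₀.1 h
      · intro A hA B hB
        rw [hKdef, Finset.mem_union] at hA hB
        rcases hA with hA | hA
        · rcases hB with hB | hB
          · exact hH.2.2 A hA B hB
          · exact (hHC (Finset.mem_coe.mpr hA)).2 B hB
        · rcases hB with hB | hB
          · exact compat_symm ((hHC (Finset.mem_coe.mpr hB)).2 A hA)
          · exact hH₀.2.2 A hA B hB
    have hsK : ∀ x : α, {x} ∈ K := fun x => Finset.mem_union_right H (hsing x)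
    obtain ⟨K', hKK', hK'h, hcard⟩ :=
      extend (2 * Fintype.card α) K hKh hsK (by omega)
    refine ⟨K', Finset.subset_union_left.trans hKK', ?_, hK'h, hcard⟩
    intro B hB
    rw [Finset.mem_coe] at hB
    refine ⟨fun h => hK'h.1 (h ▸ hB), ?_⟩
    intro C' hC'
    have hC'K' : C' ∈ K' := hKK' (Finset.mem_union_right H hC')
    exact hK'h.2.2 B hB C' hC'K'
end

section
/- Let G be a connected simple graph on a finite nonempty vertex set X. Then the collection C = {Y ⊆ X : Y ≠ ∅ and the subgraph of G induced on Y is connected} is bureaucratic. -/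
open Finset

private lemma walk_cross {β : Type*} {Γ : SimpleGraph β} {p : β → Prop} :
    ∀ {a b : β}, Γ.Walk a b → p a → ¬ p b → ∃ u v, Γ.Adj u v ∧ p u ∧ ¬ p v := by
  intro a b w
  induction w with
  | nil => intro ha hb; exact absurd ha hb
  | @cons a c b adj w ih =>
    intro ha hb
    by_cases hc : p c
    · exact ih hc hb
    · exact ⟨a, c, adj, ha, hc⟩

private lemma singleton_induce_connected {α : Type*} (G : SimpleGraph α) (x : α) :
    (G.induce ({x} : Set α)).Connected := by
  rw [SimpleGraph.connected_iff]
  refine ⟨?_, ⟨⟨x, rfl⟩⟩⟩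
  rintro ⟨a, ha⟩ ⟨b, hb⟩
  cases ha; cases hb
  rfl

private lemma exists_cross_edge {α : Type*} [DecidableEq α] (G : SimpleGraph α)
    {A s : Finset α} (hA : (G.induce (A : Set α)).Connected)
    (hs : s.Nonempty) (hss : s ⊂ A) :
    ∃ u ∈ s, ∃ v ∈ A, v ∉ s ∧ G.Adj u v := by
  obtain ⟨x, hx⟩ := hs
  obtain ⟨y, hyA, hys⟩ := Finset.exists_of_ssubset hss
  have hxA : x ∈ A := hss.1 hx
  obtain ⟨w⟩ := hA.preconnected ⟨x, hxA⟩ ⟨y, hyA⟩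
  obtain ⟨u, v, hadj, hu, hv⟩ := walk_cross (p := fun z : (A : Set α) => z.val ∈ s) w hx hys
  exact ⟨u.val, hu, v.val, v.prop, hv, hadj⟩

section Hierarchy

variable {α : Type*} [Fintype α] [DecidableEq α]

private lemma mem_nonempty {M : Finset (Finset α)} (hM : IsHierarchy M) {E : Finset α}
    (hE : E ∈ M) : E.Nonempty :=
  Finset.nonempty_of_ne_empty (fun h => hM.1 (h ▸ hE))

/-- In a maximal hierarchy inside the connected sets, all singletons occur. -/
private lemma singletons_mem (G : SimpleGraph α) {M : Finset (Finset α)} (hM : IsHierarchy M)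
    (hmax : ∀ B ∉ M, B.Nonempty → (G.induce (B : Set α)).Connected →
      ¬ IsHierarchy (insert B M)) (x : α) : {x} ∈ M := by
  by_contra hx
  refine hmax {x} hx (singleton_nonempty x) ?_ ⟨?_, ?_, ?_⟩
  · rw [coe_singleton]; exact singleton_induce_connected G x
  · simp only [mem_insert]
    rintro (h | h)
    · exact (singleton_ne_empty x) h.symm
    · exact hM.1 h
  · exact mem_insert_of_mem hM.2.1
  · intro E hE F hF
    rcases mem_insert.1 hE with rfl | hEM <;> rcases mem_insert.1 hF with rfl | hFM
    · right; left; exact inter_self _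
    · by_cases hxF : x ∈ F
      · right; left; exact singleton_inter_of_mem hxF
      · left; exact singleton_inter_of_notMem hxF
    · by_cases hxE : x ∈ E
      · right; right; rw [inter_comm]; exact singleton_inter_of_mem hxE
      · left; rw [inter_comm]; exact singleton_inter_of_notMem hxE
    · exact hM.2.2 E hEM F hFM

/-- top of the chain of members containing x strictly below A -/
private lemma exists_chain_top {M : Finset (Finset α)} (hM : IsHierarchy M)
    (hsing : ∀ x : α, {x} ∈ M) {A : Finset α} (hA2 : 2 ≤ A.card) {x : α} (hx : x ∈ A) :
    ∃ T ∈ M, x ∈ T ∧ T ⊂ A ∧ ∀ E ∈ M, E ⊂ A → x ∈ E → E ⊆ T := by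
  have hxssub : ({x} : Finset α) ⊂ A := by
    refine lt_iff_le_and_ne.2 ⟨singleton_subset_iff.2 hx, ?_⟩
    intro h
    rw [← h, card_singleton] at hA2
    omega
  have hne : (M.filter (fun E => x ∈ E ∧ E ⊂ A)).Nonempty :=
    ⟨{x}, mem_filter.2 ⟨hsing x, mem_singleton_self x, hxssub⟩⟩
  obtain ⟨T, hTS, hTmax⟩ := Finset.exists_max_image _ card hne
  obtain ⟨hTM, hxT, hTA⟩ := mem_filter.1 hTS
  refine ⟨T, hTM, hxT, hTA, ?_⟩
  intro E hE hEA hxE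
  rcases hM.2.2 E hE T hTM with h | h | h
  · exact absurd (mem_inter.2 ⟨hxE, hxT⟩) (by simp [h])
  · exact inter_eq_left.1 h
  · have hTE : T ⊆ E := inter_eq_right.1 h
    have hle : E.card ≤ T.card := hTmax E (mem_filter.2 ⟨hE, hxE, hEA⟩)
    rw [Finset.eq_of_subset_of_card_le hTE hle]

/-- In a maximal hierarchy inside the connected sets, every non-singleton member
splits into two disjoint members. -/
private lemma exists_split (G : SimpleGraph α) {M : Finset (Finset α)} (hM : IsHierarchy M)
    (hconn : ∀ E ∈ M, (G.induce (E : Set α)).Connected)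
    (hsing : ∀ x : α, {x} ∈ M)
    (hmax : ∀ B ∉ M, B.Nonempty → (G.induce (B : Set α)).Connected →
      ¬ IsHierarchy (insert B M)) :
    ∀ A ∈ M, 2 ≤ A.card → ∃ B ∈ M, ∃ D ∈ M, B ∪ D = A ∧ B ∩ D = ∅ := by
  intro A hA hA2
  have hchoice : ∀ x ∈ A, ∃ T ∈ M, x ∈ T ∧ T ⊂ A ∧ ∀ E ∈ M, E ⊂ A → x ∈ E → E ⊆ T :=
    fun x hx => exists_chain_top hM hsing hA2 hx
  choose! c hcM hcx hcA hctop using hchoice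
  have hdisj : ∀ x ∈ A, ∀ y ∈ A, c x = c y ∨ c x ∩ c y = ∅ := by
    intro x hx y hy
    rcases hM.2.2 _ (hcM x hx) _ (hcM y hy) with h | h | h
    · exact Or.inr h
    · exact Or.inl (Finset.Subset.antisymm (inter_eq_left.1 h)
        (hctop x hx _ (hcM y hy) (hcA y hy) (inter_eq_left.1 h (hcx x hx))))
    · exact Or.inl (Finset.Subset.antisymm (inter_eq_right.1 h)
        (hctop y hy _ (hcM x hx) (hcA x hx) (inter_eq_right.1 h (hcx y hy)))).symm
  have hAne : A.Nonempty := Finset.card_pos.1 (by omega)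
  obtain ⟨x₀, hx₀⟩ := hAne
  obtain ⟨u, hu, v, hvA, hvs, hadj⟩ := exists_cross_edge G (hconn A hA)
    ⟨x₀, hcx x₀ hx₀⟩ (hcA x₀ hx₀)
  have huA : u ∈ A := (hcA x₀ hx₀).1 hu
  have hcu : c u = c x₀ := by
    rcases hdisj u huA x₀ hx₀ with h | h
    · exact h
    · exact absurd (mem_inter.2 ⟨hcx u huA, hu⟩) (by simp [h])
  have hcvx : v ∈ c v := hcx v hvA
  have hneq : c u ≠ c v := by
    intro h
    have : v ∈ c u := h.symm ▸ hcvx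
    exact hvs (hcu ▸ this)
  have hdisjuv : c u ∩ c v = ∅ := (hdisj u huA v hvA).resolve_left hneq
  by_cases hBA : c u ∪ c v = A
  · exact ⟨c u, hcM u huA, c v, hcM v hvA, hBA, hdisjuv⟩
  · exfalso
    set B := c u ∪ c v with hB
    have hBsubA : B ⊆ A := union_subset (hcA u huA).1 (hcA v hvA).1
    have hBss : B ⊂ A := lt_iff_le_and_ne.2 ⟨hBsubA, hBA⟩
    have huB : u ∈ B := mem_union_left _ (hcx u huA)
    have hvB : v ∈ B := mem_union_right _ hcvx
    have hBconn : (G.induce (B : Set α)).Connected := by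
      rw [hB, coe_union]
      exact SimpleGraph.connected_induce_union (hconn _ (hcM u huA)).preconnected
        (hconn _ (hcM v hvA)).preconnected (hcx u huA) hcvx hadj
    have hBnotM : B ∉ M := by
      intro hBM
      have h1 : B ⊆ c u := hctop u huA B hBM hBss huB
      have h2 : v ∈ c u := h1 hvB
      exact absurd (mem_inter.2 ⟨h2, hcvx⟩) (by simp [hdisjuv])
    have key : ∀ E ∈ M, E ∩ B = ∅ ∨ E ∩ B = E ∨ E ∩ B = B := by
      intro E hE
      rcases hM.2.2 E hE A hA with h | h | h
      · left
        have hsub : E ∩ B ⊆ E ∩ A := inter_subset_inter Finset.Subset.rfl hBsubA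
        rw [h] at hsub
        exact subset_empty.1 hsub
      · by_cases hEA' : E = A
        · subst hEA'; right; right; exact inter_eq_right.2 hBsubA
        · have hEss : E ⊂ A := lt_iff_le_and_ne.2 ⟨inter_eq_left.1 h, hEA'⟩
          obtain ⟨w, hw⟩ := mem_nonempty hM hE
          have hwA : w ∈ A := hEss.1 hw
          have hEc : E ⊆ c w := hctop w hwA E hE hEss hw
          rcases hdisj w hwA u huA with h1 | h1
          · right; left
            exact inter_eq_left.2 (hEc.trans (h1 ▸ subset_union_left))
          · rcases hdisj w hwA v hvA with h2 | h2
            · right; left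
              exact inter_eq_left.2 (hEc.trans (h2 ▸ subset_union_right))
            · left
              apply subset_empty.1
              intro e he
              obtain ⟨he1, he2⟩ := mem_inter.1 he
              rcases mem_union.1 he2 with h3 | h3
              · exact absurd (mem_inter.2 ⟨hEc he1, h3⟩) (by simp [h1])
              · exact absurd (mem_inter.2 ⟨hEc he1, h3⟩) (by simp [h2])
      · right; right; exact inter_eq_right.2 (hBsubA.trans (inter_eq_right.1 h))
    refine hmax B hBnotM ⟨u, huB⟩ hBconn ⟨?_, ?_, ?_⟩
    · simp only [mem_insert]
      rintro (h | h)
      · exact (Finset.nonempty_iff_ne_empty.1 ⟨u, huB⟩) h.symm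
      · exact hM.1 h
    · exact mem_insert_of_mem hM.2.1
    · intro E hE F hF
      rcases mem_insert.1 hE with rfl | hEM <;> rcases mem_insert.1 hF with rfl | hFM
      · right; left; exact inter_self _
      · rcases key F hFM with h | h | h
        · left; rwa [inter_comm]
        · right; right; rwa [inter_comm]
        · right; left; rwa [inter_comm]
      · exact key E hEM
      · exact hM.2.2 E hEM F hFM

/-- Counting: a hierarchy in which every member of size ≥ 2 splits into two
disjoint members has exactly `2|S| - 1` members below each member `S`. -/
private lemma hierarchy_count {M : Finset (Finset α)} (hM : IsHierarchy M)
    (hsplit : ∀ A ∈ M, 2 ≤ A.card → ∃ B ∈ M, ∃ D ∈ M, B ∪ D = A ∧ B ∩ D = ∅) :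
    ∀ n : ℕ, ∀ S ∈ M, S.card ≤ n → (M.filter (· ⊆ S)).card = 2 * S.card - 1 := by
  intro n
  induction n with
  | zero =>
    intro S hS h0
    exact absurd (card_eq_zero.1 (Nat.le_zero.1 h0) ▸ hS) hM.1
  | succ n ih =>
    intro S hS hcard
    have hSne : S.Nonempty := mem_nonempty hM hS
    rcases lt_or_ge S.card 2 with h2 | h2
    · have h1 : S.card = 1 := by
        have := Finset.card_pos.2 hSne
        omega
      have hfilt : M.filter (· ⊆ S) = {S} := by
        ext E
        simp only [mem_filter, mem_singleton]
        constructor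
        · rintro ⟨hEM, hES⟩
          have hEne := mem_nonempty hM hEM
          have : 1 ≤ E.card := Finset.card_pos.2 hEne
          exact Finset.eq_of_subset_of_card_le hES (by omega)
        · rintro rfl; exact ⟨hS, Finset.Subset.rfl⟩
      rw [hfilt, card_singleton, h1]
    · obtain ⟨B, hB, D, hD, hBD, hdisj⟩ := hsplit S hS h2
      have hBne : B.Nonempty := mem_nonempty hM hB
      have hDne : D.Nonempty := mem_nonempty hM hD
      have hBS : B ⊆ S := hBD ▸ subset_union_left
      have hDS : D ⊆ S := hBD ▸ subset_union_right
      have hdisj' : Disjoint B D := disjoint_iff_inter_eq_empty.2 hdisj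
      have hBneS : B ≠ S := by
        rintro rfl
        obtain ⟨d, hd⟩ := hDne
        exact (disjoint_left.1 hdisj' (hDS hd)) hd
      have hDneS : D ≠ S := by
        rintro rfl
        obtain ⟨b, hb⟩ := hBne
        exact (disjoint_left.1 hdisj' hb) (hBS hb)
      have hcardB : B.card < S.card := card_lt_card (lt_iff_le_and_ne.2 ⟨hBS, hBneS⟩)
      have hcardD : D.card < S.card := card_lt_card (lt_iff_le_and_ne.2 ⟨hDS, hDneS⟩)
      have hBcount := ih B hB (by omega)
      have hDcount := ih D hD (by omega)
      have hpart : M.filter (· ⊆ S) = insert S (M.filter (· ⊆ B) ∪ M.filter (· ⊆ D)) := by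
        ext E
        simp only [mem_filter, mem_insert, mem_union]
        constructor
        · rintro ⟨hEM, hES⟩
          by_cases hESeq : E = S
          · exact Or.inl hESeq
          right
          rcases hM.2.2 E hEM B hB with h | h | h
          · right
            refine ⟨hEM, fun e he => ?_⟩
            have heS : e ∈ S := hES he
            rw [← hBD] at heS
            rcases mem_union.1 heS with h3 | h3
            · exact absurd (mem_inter.2 ⟨he, h3⟩) (by simp [h])
            · exact h3
          · exact Or.inl ⟨hEM, inter_eq_left.1 h⟩
          · have hBE : B ⊆ E := inter_eq_right.1 h
            rcases hM.2.2 E hEM D hD with h' | h' | h'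
            · left
              refine ⟨hEM, fun e he => ?_⟩
              have heS : e ∈ S := hES he
              rw [← hBD] at heS
              rcases mem_union.1 heS with h3 | h3
              · exact h3
              · exact absurd (mem_inter.2 ⟨he, h3⟩) (by simp [h'])
            · obtain ⟨b, hb⟩ := hBne
              have : b ∈ D := (inter_eq_left.1 h') (hBE hb)
              exact absurd (mem_inter.2 ⟨hb, this⟩) (by simp [hdisj])
            · have hDE : D ⊆ E := inter_eq_right.1 h'
              have : S ⊆ E := hBD ▸ union_subset hBE hDE
              exact absurd (Finset.Subset.antisymm hES this) hESeq
        · rintro (rfl | ⟨hEM, h⟩ | ⟨hEM, h⟩)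
          · exact ⟨hS, Finset.Subset.rfl⟩
          · exact ⟨hEM, h.trans hBS⟩
          · exact ⟨hEM, h.trans hDS⟩
      have hSnotin : S ∉ M.filter (· ⊆ B) ∪ M.filter (· ⊆ D) := by
        simp only [mem_union, mem_filter]
        rintro (⟨_, h⟩ | ⟨_, h⟩)
        · exact hBneS (Finset.Subset.antisymm hBS h)
        · exact hDneS (Finset.Subset.antisymm hDS h)
      have hdisjf : Disjoint (M.filter (· ⊆ B)) (M.filter (· ⊆ D)) := by
        rw [Finset.disjoint_left]
        intro E hE1 hE2
        obtain ⟨hEM, h1⟩ := mem_filter.1 hE1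
        obtain ⟨_, h2⟩ := mem_filter.1 hE2
        have hsub : E ⊆ B ∩ D := subset_inter h1 h2
        rw [hdisj] at hsub
        exact hM.1 ((subset_empty.1 hsub) ▸ hEM)
      have hcardS : B.card + D.card = S.card := by
        rw [← hBD, card_union_of_disjoint hdisj']
      rw [hpart, card_insert_of_notMem hSnotin, card_union_of_disjoint hdisjf,
        hBcount, hDcount]
      have hb1 : 1 ≤ B.card := Finset.card_pos.2 hBne
      have hd1 : 1 ≤ D.card := Finset.card_pos.2 hDne
      omega

end Hierarchy

/-- For a connected graph `G` on a finite nonempty vertex set, the collection of nonempty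
vertex subsets inducing a connected subgraph is bureaucratic. -/
theorem connectedSubsets_bureaucratic {α : Type*} [Fintype α] [DecidableEq α] [Nonempty α]
    (G : SimpleGraph α) (hG : G.Connected) :
    IsBureaucratic {Y : Finset α | Y.Nonempty ∧ (G.induce (Y : Set α)).Connected} := by
  classical
  have hunivC : (Finset.univ : Finset α) ∈
      {Y : Finset α | Y.Nonempty ∧ (G.induce (Y : Set α)).Connected} := by
    refine ⟨Finset.univ_nonempty, ?_⟩
    rw [coe_univ]
    exact (SimpleGraph.induceUnivIso G).connected_iff.2 hG
  refine ⟨⟨Finset.univ, hunivC⟩, ?_, ?_⟩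
  · rintro ⟨h, -⟩
    exact Finset.not_nonempty_empty h
  · intro H hHC hH
    let Q : Finset (Finset α) → Prop := fun N =>
      H ⊆ N ∧ IsHierarchy N ∧ ∀ E ∈ N, (G.induce (E : Set α)).Connected
    have hHQ : Q H := ⟨Finset.Subset.rfl, hH, fun E hE => (hHC (Finset.mem_coe.2 hE)).2⟩
    obtain ⟨M, hMmem, hMmax⟩ := Finset.exists_max_image (Finset.univ.filter Q) card
      ⟨H, mem_filter.2 ⟨mem_univ _, hHQ⟩⟩
    obtain ⟨hHM, hMh, hMconn⟩ := (mem_filter.1 hMmem).2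
    have hmax : ∀ B ∉ M, B.Nonempty → (G.induce (B : Set α)).Connected →
        ¬ IsHierarchy (insert B M) := by
      intro B hBM hBne hBconn hIns
      have hQ : Q (insert B M) := by
        refine ⟨hHM.trans (subset_insert _ _), hIns, ?_⟩
        intro E hE
        rcases mem_insert.1 hE with rfl | h
        · exact hBconn
        · exact hMconn E h
      have hle := hMmax _ (mem_filter.2 ⟨mem_univ _, hQ⟩)
      rw [card_insert_of_notMem hBM] at hle
      omega
    have hsing := singletons_mem G hMh hmax
    have hsplit := exists_split G hMh hMconn hsing hmax
    have hcount := hierarchy_count hMh hsplit (Finset.univ : Finset α).card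
      Finset.univ hMh.2.1 le_rfl
    rw [Finset.filter_true_of_mem (fun E _ => subset_univ E)] at hcount
    refine ⟨M, hHM, ?_, hMh, ?_⟩
    · intro E hE
      exact ⟨mem_nonempty hMh (Finset.mem_coe.1 hE), hMconn E (Finset.mem_coe.1 hE)⟩
    · rwa [card_univ] at hcount
end

section
/- Let X be a finite nonempty set and let H be a hierarchy on X. Then |H| = 2|X| − 1 if and only if (i) H contains all trivial clusters of X, and (ii) every set C ∈ H with |C| > 1 can be written as a disjoint union C = A ⊔ B of two sets A, B ∈ H. -/
namespace MaxHierAux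

variable {α : Type*} [DecidableEq α]

/-- Laminarity condition of a family. -/
def Lam (H : Finset (Finset α)) : Prop :=
  ∀ A ∈ H, ∀ B ∈ H, A ∩ B = ∅ ∨ A ∩ B = A ∨ A ∩ B = B

lemma exists_maximal_above (P : Finset (Finset α)) {B : Finset α} (hB : B ∈ P) :
    ∃ A ∈ P, B ⊆ A ∧ ∀ B' ∈ P, ¬ A ⊂ B' := by
  obtain ⟨A, hA, hmax⟩ := (P.filter (B ⊆ ·)).exists_max_image Finset.card
    ⟨B, Finset.mem_filter.mpr ⟨hB, Finset.Subset.refl B⟩⟩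
  rw [Finset.mem_filter] at hA
  refine ⟨A, hA.1, hA.2, fun B' hB' hAB' => ?_⟩
  have hB'm : B' ∈ P.filter (B ⊆ ·) :=
    Finset.mem_filter.mpr ⟨hB', hA.2.trans hAB'.subset⟩
  exact absurd (hmax B' hB'm) (not_le.mpr (Finset.card_lt_card hAB'))

lemma maximal_disjoint {H P : Finset (Finset α)} (hlam : Lam H) (hPH : P ⊆ H)
    {A A' : Finset α} (hA : A ∈ P) (hA' : A' ∈ P) (hAm : ∀ B ∈ P, ¬ A ⊂ B)
    (hA'm : ∀ B ∈ P, ¬ A' ⊂ B) (hne : A ≠ A') : A ∩ A' = ∅ := by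
  rcases hlam A (hPH hA) A' (hPH hA') with h | h | h
  · exact h
  · exact absurd (lt_of_le_of_ne (Finset.inter_eq_left.mp h) hne) (hAm A' hA')
  · exact absurd (lt_of_le_of_ne (Finset.inter_eq_right.mp h) (Ne.symm hne)) (hA'm A hA)

/-- Upper bound: a laminar family of nonempty subsets of `S` containing `S`
has at most `2|S| - 1` members. -/
lemma card_lt (S : Finset α) : ∀ H : Finset (Finset α), ∅ ∉ H → Lam H →
    (∀ A ∈ H, A ⊆ S) → S ∈ H → H.card + 1 ≤ 2 * S.card := by
  induction S using Finset.strongInduction with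
  | _ S ih =>
  intro H hne hlam hsub hS
  classical
  set P := H.filter (· ⊂ S) with hPdef
  set K := P.filter (fun A => ∀ B ∈ P, ¬ A ⊂ B) with hKdef
  have hKP : K ⊆ P := Finset.filter_subset _ _
  have hPH : P ⊆ H := Finset.filter_subset _ _
  have hKss : ∀ A ∈ K, A ⊂ S := fun A hA => (Finset.mem_filter.mp (hKP hA)).2
  have hcover : H.erase S ⊆ K.biUnion (fun A => H.filter (· ⊆ A)) := by
    intro B hB
    obtain ⟨hBS, hBH⟩ := Finset.mem_erase.mp hB
    have hBP : B ∈ P := Finset.mem_filter.mpr ⟨hBH, lt_of_le_of_ne (hsub B hBH) hBS⟩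
    obtain ⟨A, hA, hBA, hmax⟩ := exists_maximal_above P hBP
    exact Finset.mem_biUnion.mpr ⟨A, Finset.mem_filter.mpr ⟨hA, hmax⟩,
      Finset.mem_filter.mpr ⟨hBH, hBA⟩⟩
  have hKdisj : ∀ A ∈ K, ∀ A' ∈ K, A ≠ A' → A ∩ A' = ∅ := by
    intro A hA A' hA' hne'
    obtain ⟨hAP, hAm⟩ := Finset.mem_filter.mp hA
    obtain ⟨hA'P, hA'm⟩ := Finset.mem_filter.mp hA'
    exact maximal_disjoint hlam hPH hAP hA'P hAm hA'm hne'
  have hsum : ∑ A ∈ K, A.card ≤ S.card := by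
    rw [← Finset.card_biUnion (fun A hA A' hA' hne' => by
      simpa [Finset.disjoint_iff_inter_eq_empty] using hKdisj A hA A' hA' hne')]
    exact Finset.card_le_card (Finset.biUnion_subset.mpr fun A hA => (hKss A hA).subset)
  have hIH : ∀ A ∈ K, (H.filter (· ⊆ A)).card + 1 ≤ 2 * A.card := by
    intro A hA
    refine ih A (hKss A hA) _ (fun h => hne (Finset.mem_filter.mp h).1)
      (fun B hB B' hB' => hlam B (Finset.mem_filter.mp hB).1 B' (Finset.mem_filter.mp hB').1)
      (fun B hB => (Finset.mem_filter.mp hB).2)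
      (Finset.mem_filter.mpr ⟨hPH (hKP hA), Finset.Subset.refl A⟩)
  have hsum2 : (∑ A ∈ K, (H.filter (· ⊆ A)).card) + K.card ≤ 2 * S.card := by
    calc (∑ A ∈ K, (H.filter (· ⊆ A)).card) + K.card
        = ∑ A ∈ K, ((H.filter (· ⊆ A)).card + 1) := by
          rw [Finset.sum_add_distrib, Finset.sum_const, smul_eq_mul, mul_one]
      _ ≤ ∑ A ∈ K, 2 * A.card := Finset.sum_le_sum hIH
      _ = 2 * ∑ A ∈ K, A.card := by rw [Finset.mul_sum]
      _ ≤ 2 * S.card := by omega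
  have he : (H.erase S).card ≤ ∑ A ∈ K, (H.filter (· ⊆ A)).card :=
    (Finset.card_le_card hcover).trans Finset.card_biUnion_le
  have hHc : (H.erase S).card = H.card - 1 := Finset.card_erase_of_mem hS
  have hHpos : 0 < H.card := Finset.card_pos.mpr ⟨S, hS⟩
  have hSpos : 0 < S.card := Finset.card_pos.mpr
    (Finset.nonempty_iff_ne_empty.mpr fun h => hne (h ▸ hS))
  rcases Nat.lt_or_ge K.card 2 with hK2 | hK2
  · interval_cases hcase : K.card
    · have : K = ∅ := Finset.card_eq_zero.mp hcase
      rw [this, Finset.sum_empty] at he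
      omega
    · obtain ⟨A, hKA⟩ := Finset.card_eq_one.mp hcase
      have hAK : A ∈ K := by rw [hKA]; exact Finset.mem_singleton_self A
      have hAlt : A.card < S.card := Finset.card_lt_card (hKss A hAK)
      have hfA := hIH A hAK
      rw [hKA, Finset.sum_singleton] at he
      omega
  · omega

/-- Lower bound under the two conditions. -/
lemma card_ge (S : Finset α) : ∀ H : Finset (Finset α), ∅ ∉ H → Lam H →
    (∀ A ∈ H, A ⊆ S) → S ∈ H → (∀ x ∈ S, {x} ∈ H) →
    (∀ C ∈ H, 1 < C.card → ∃ A ∈ H, ∃ B ∈ H, Disjoint A B ∧ C = A ∪ B) →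
    2 * S.card ≤ H.card + 1 := by
  induction S using Finset.strongInduction with
  | _ S ih =>
  intro H hne hlam hsub hS hsing hsplit
  classical
  have hmemne : ∀ A ∈ H, A.Nonempty := fun A hA =>
    Finset.nonempty_iff_ne_empty.mpr fun h => hne (h ▸ hA)
  have hSpos : 0 < S.card := Finset.card_pos.mpr (hmemne S hS)
  by_cases hS1 : 1 < S.card
  · obtain ⟨A, hA, B, hB, hd, hu⟩ := hsplit S hS hS1
    have hAne := hmemne A hA
    have hBne := hmemne B hB
    have hAS : A ⊆ S := hsub A hA
    have hBS : B ⊆ S := hsub B hB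
    have hASs : A ⊂ S := by
      refine lt_of_le_of_ne hAS fun h => ?_
      obtain ⟨y, hy⟩ := hBne
      exact (Finset.disjoint_right.mp hd hy) (h ▸ hBS hy)
    have hBSs : B ⊂ S := by
      refine lt_of_le_of_ne hBS fun h => ?_
      obtain ⟨y, hy⟩ := hAne
      exact (Finset.disjoint_left.mp hd hy) (h ▸ hAS hy)
    have hrestr : ∀ T : Finset α, T ∈ H → T ⊂ S →
        2 * T.card ≤ (H.filter (· ⊆ T)).card + 1 := by
      intro T hT hTS
      refine ih T hTS _ (fun h => hne (Finset.mem_filter.mp h).1)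
        (fun C hC C' hC' => hlam C (Finset.mem_filter.mp hC).1 C' (Finset.mem_filter.mp hC').1)
        (fun C hC => (Finset.mem_filter.mp hC).2)
        (Finset.mem_filter.mpr ⟨hT, Finset.Subset.refl T⟩)
        (fun x hx => Finset.mem_filter.mpr ⟨hsing x (hTS.subset hx),
          Finset.singleton_subset_iff.mpr hx⟩) ?_
      intro C hC hC1
      obtain ⟨hCH, hCT⟩ := Finset.mem_filter.mp hC
      obtain ⟨A', hA', B', hB', hd', hu'⟩ := hsplit C hCH hC1
      have hA'C : A' ⊆ C := hu' ▸ Finset.subset_union_left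
      have hB'C : B' ⊆ C := hu' ▸ Finset.subset_union_right
      exact ⟨A', Finset.mem_filter.mpr ⟨hA', hA'C.trans hCT⟩,
        B', Finset.mem_filter.mpr ⟨hB', hB'C.trans hCT⟩, hd', hu'⟩
    have hIA := hrestr A hA hASs
    have hIB := hrestr B hB hBSs
    have hsubset : insert S (H.filter (· ⊆ A) ∪ H.filter (· ⊆ B)) ⊆ H := by
      intro C hC
      rcases Finset.mem_insert.mp hC with rfl | hC
      · exact hS
      · rcases Finset.mem_union.mp hC with h | h
        · exact (Finset.mem_filter.mp h).1
        · exact (Finset.mem_filter.mp h).1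
    have hSnot : S ∉ H.filter (· ⊆ A) ∪ H.filter (· ⊆ B) := by
      intro h
      rcases Finset.mem_union.mp h with h | h
      · exact hASs.not_subset (Finset.mem_filter.mp h).2
      · exact hBSs.not_subset (Finset.mem_filter.mp h).2
    have hdisjAB : Disjoint (H.filter (· ⊆ A)) (H.filter (· ⊆ B)) := by
      rw [Finset.disjoint_left]
      intro C hCA hCB
      obtain ⟨hCH, hCA'⟩ := Finset.mem_filter.mp hCA
      obtain ⟨-, hCB'⟩ := Finset.mem_filter.mp hCB
      obtain ⟨z, hz⟩ := hmemne C hCH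
      exact (Finset.disjoint_left.mp hd (hCA' hz)) (hCB' hz)
    have hcard := Finset.card_le_card hsubset
    rw [Finset.card_insert_of_notMem hSnot, Finset.card_union_of_disjoint hdisjAB] at hcard
    have hScard : S.card = A.card + B.card := by
      rw [hu, Finset.card_union_of_disjoint hd]
    omega
  · have : 0 < H.card := Finset.card_pos.mpr ⟨S, hS⟩
    omega

end MaxHierAux

open MaxHierAux in
theorem MaxHierAux.hierarchy_maximum_iff' {α : Type*} [Fintype α] [DecidableEq α] [Nonempty α]
    (H : Finset (Finset α))
    (hH : ∅ ∉ H ∧ Finset.univ ∈ H ∧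
      ∀ A ∈ H, ∀ B ∈ H, A ∩ B = ∅ ∨ A ∩ B = A ∨ A ∩ B = B) :
    H.card = 2 * Fintype.card α - 1 ↔
      (((∀ x : α, {x} ∈ H) ∧ Finset.univ ∈ H) ∧
        ∀ C ∈ H, 1 < C.card → ∃ A ∈ H, ∃ B ∈ H, Disjoint A B ∧ C = A ∪ B) := by
  classical
  obtain ⟨hne, hU, hlam⟩ := hH
  have hlam' : Lam H := hlam
  have hn : 0 < Fintype.card α := Fintype.card_pos
  have hub := card_lt Finset.univ H hne hlam' (fun A _ => Finset.subset_univ A) hU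
  rw [Finset.card_univ] at hub
  have hmemne : ∀ A ∈ H, A.Nonempty := fun A hA =>
    Finset.nonempty_iff_ne_empty.mpr fun h => hne (h ▸ hA)
  constructor
  · intro hcard
    -- Step 1: all singletons belong to H
    have hsing : ∀ x : α, {x} ∈ H := by
      intro x
      by_contra hx
      have hlamI : Lam (insert {x} H) := by
        intro A hA B hB
        rcases Finset.mem_insert.mp hA with rfl | hA
        · rcases Finset.mem_insert.mp hB with rfl | hB
          · right; left; exact Finset.inter_self _
          · by_cases hxB : x ∈ B
            · right; left; exact Finset.singleton_inter_of_mem hxB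
            · left; exact Finset.singleton_inter_of_notMem hxB
        · rcases Finset.mem_insert.mp hB with rfl | hB
          · by_cases hxA : x ∈ A
            · right; right; exact Finset.inter_singleton_of_mem hxA
            · left; exact Finset.inter_singleton_of_notMem hxA
          · exact hlam A hA B hB
      have h2 := card_lt Finset.univ (insert {x} H)
        (by
          intro h
          rcases Finset.mem_insert.mp h with h | h
          · exact Finset.singleton_ne_empty x h.symm
          · exact hne h)
        hlamI (fun A _ => Finset.subset_univ A) (Finset.mem_insert_of_mem hU)
      rw [Finset.card_univ, Finset.card_insert_of_notMem hx] at h2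
      omega
    refine ⟨⟨hsing, hU⟩, ?_⟩
    -- Step 2: every member of size > 1 splits
    intro C hC hC1
    set P := H.filter (· ⊂ C) with hPdef
    set K := P.filter (fun A => ∀ B ∈ P, ¬ A ⊂ B) with hKdef
    have hKP : K ⊆ P := Finset.filter_subset _ _
    have hPH : P ⊆ H := Finset.filter_subset _ _
    have hKH : K ⊆ H := hKP.trans hPH
    have hKss : ∀ A ∈ K, A ⊂ C := fun A hA => (Finset.mem_filter.mp (hKP hA)).2
    have hcov : ∀ x ∈ C, ∃ A ∈ K, x ∈ A := by
      intro x hx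
      have hxC : ({x} : Finset α) ⊂ C := by
        refine lt_of_le_of_ne (Finset.singleton_subset_iff.mpr hx) fun h => ?_
        rw [← h] at hC1
        simp at hC1
      have hxP : ({x} : Finset α) ∈ P := Finset.mem_filter.mpr ⟨hsing x, hxC⟩
      obtain ⟨A, hA, hxA, hmax⟩ := exists_maximal_above P hxP
      exact ⟨A, Finset.mem_filter.mpr ⟨hA, hmax⟩, hxA (Finset.mem_singleton_self x)⟩
    have hKdisj : ∀ A ∈ K, ∀ A' ∈ K, A ≠ A' → A ∩ A' = ∅ := by
      intro A hA A' hA' hne'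
      obtain ⟨hAP, hAm⟩ := Finset.mem_filter.mp hA
      obtain ⟨hA'P, hA'm⟩ := Finset.mem_filter.mp hA'
      exact maximal_disjoint hlam' hPH hAP hA'P hAm hA'm hne'
    obtain ⟨x, hx⟩ : C.Nonempty := Finset.card_pos.mp (by omega)
    obtain ⟨Ax, hAxK, hxAx⟩ := hcov x hx
    obtain ⟨y, hyC, hyAx⟩ := Finset.exists_of_ssubset (hKss Ax hAxK)
    obtain ⟨Ay, hAyK, hyAy⟩ := hcov y hyC
    have hAxy : Ax ≠ Ay := fun h => hyAx (h ▸ hyAy)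
    by_cases hall : ∀ A ∈ K, A = Ax ∨ A = Ay
    · refine ⟨Ax, hKH hAxK, Ay, hKH hAyK, ?_, ?_⟩
      · exact Finset.disjoint_iff_inter_eq_empty.mpr (hKdisj Ax hAxK Ay hAyK hAxy)
      · apply Finset.Subset.antisymm
        · intro z hz
          obtain ⟨A, hAK, hzA⟩ := hcov z hz
          rcases hall A hAK with rfl | rfl
          · exact Finset.mem_union_left _ hzA
          · exact Finset.mem_union_right _ hzA
        · exact Finset.union_subset (hKss Ax hAxK).subset (hKss Ay hAyK).subset
    · exfalso
      push_neg at hall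
      obtain ⟨A₃, hA₃K, h3x, h3y⟩ := hall
      have hAxH : Ax ∈ H := hKH hAxK
      have hAyH : Ay ∈ H := hKH hAyK
      have hA₃H : A₃ ∈ H := hKH hA₃K
      set D := Ax ∪ Ay with hDdef
      have hDsub : D ⊆ C := Finset.union_subset (hKss Ax hAxK).subset (hKss Ay hAyK).subset
      have d3x := hKdisj A₃ hA₃K Ax hAxK h3x
      have d3y := hKdisj A₃ hA₃K Ay hAyK h3y
      have hDC : D ⊂ C := by
        rw [Finset.ssubset_iff_of_subset hDsub]
        obtain ⟨z, hz⟩ := hmemne A₃ hA₃H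
        refine ⟨z, (hKss A₃ hA₃K).subset hz, ?_⟩
        intro hzD
        rcases Finset.mem_union.mp hzD with h | h
        · have : z ∈ A₃ ∩ Ax := Finset.mem_inter.mpr ⟨hz, h⟩
          rw [d3x] at this; exact absurd this (Finset.notMem_empty z)
        · have : z ∈ A₃ ∩ Ay := Finset.mem_inter.mpr ⟨hz, h⟩
          rw [d3y] at this; exact absurd this (Finset.notMem_empty z)
      have key2 : ∀ A ∈ K, ∀ B ∈ H, A ⊆ B → A = B ∨ C ⊆ B := by
        intro A hAK B hB hAB
        obtain ⟨hAP, hAm⟩ := Finset.mem_filter.mp hAK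
        obtain ⟨hAH, hAC⟩ := Finset.mem_filter.mp hAP
        rcases hlam B hB C hC with h | h | h
        · exfalso
          obtain ⟨a, ha⟩ := hmemne A hAH
          have : a ∈ B ∩ C := Finset.mem_inter.mpr ⟨hAB ha, hAC.subset ha⟩
          rw [h] at this; exact absurd this (Finset.notMem_empty a)
        · have hBC : B ⊆ C := Finset.inter_eq_left.mp h
          rcases eq_or_ne B C with rfl | hBC'
          · right; exact Finset.Subset.refl B
          · left
            have hBP : B ∈ P := Finset.mem_filter.mpr ⟨hB, lt_of_le_of_ne hBC hBC'⟩
            by_contra hne2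
            exact hAm B hBP (lt_of_le_of_ne hAB hne2)
        · right; exact Finset.inter_eq_right.mp h
      have hkey : ∀ B ∈ H, D ∩ B = ∅ ∨ D ∩ B = D ∨ D ∩ B = B := by
        intro B hB
        rcases hlam Ax hAxH B hB with h1 | h1 | h1
        · rcases hlam Ay hAyH B hB with h2 | h2 | h2
          · left
            rw [hDdef, Finset.union_inter_distrib_right, h1, h2, Finset.union_empty]
          · rcases key2 Ay hAyK B hB (Finset.inter_eq_left.mp h2) with rfl | hCB
            · right; right
              exact Finset.inter_eq_right.mpr Finset.subset_union_right
            · right; left; exact Finset.inter_eq_left.mpr (hDsub.trans hCB)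
          · right; right
            exact Finset.inter_eq_right.mpr
              ((Finset.inter_eq_right.mp h2).trans Finset.subset_union_right)
        · rcases key2 Ax hAxK B hB (Finset.inter_eq_left.mp h1) with rfl | hCB
          · right; right
            exact Finset.inter_eq_right.mpr Finset.subset_union_left
          · right; left; exact Finset.inter_eq_left.mpr (hDsub.trans hCB)
        · right; right
          exact Finset.inter_eq_right.mpr
            ((Finset.inter_eq_right.mp h1).trans Finset.subset_union_left)
      have hDH : D ∉ H := by
        intro hD
        have hDP : D ∈ P := Finset.mem_filter.mpr ⟨hD, hDC⟩
        obtain ⟨hAxP, hAxm⟩ := Finset.mem_filter.mp hAxK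
        refine hAxm D hDP (lt_of_le_of_ne Finset.subset_union_left fun h => ?_)
        exact hyAx (h ▸ Finset.mem_union_right _ hyAy)
      have hlamI : Lam (insert D H) := by
        intro A hA B hB
        rcases Finset.mem_insert.mp hA with rfl | hA
        · rcases Finset.mem_insert.mp hB with rfl | hB
          · right; left; exact Finset.inter_self _
          · exact hkey B hB
        · rcases Finset.mem_insert.mp hB with rfl | hB
          · rcases hkey A hA with h | h | h
            · left; rwa [Finset.inter_comm]
            · right; right; rwa [Finset.inter_comm]
            · right; left; rwa [Finset.inter_comm]
          · exact hlam A hA B hB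
      have h2 := card_lt Finset.univ (insert D H)
        (by
          intro h
          rcases Finset.mem_insert.mp h with h | h
          · obtain ⟨z, hz⟩ := hmemne Ax hAxH
            have hz2 : z ∈ (∅ : Finset α) := by
              rw [h]; exact Finset.mem_union_left _ hz
            exact absurd hz2 (Finset.notMem_empty z)
          · exact hne h)
        hlamI (fun A _ => Finset.subset_univ A) (Finset.mem_insert_of_mem hU)
      rw [Finset.card_univ, Finset.card_insert_of_notMem hDH] at h2
      omega
  · rintro ⟨⟨hsing, -⟩, hsplit⟩
    have hlb := card_ge Finset.univ H hne hlam' (fun A _ => Finset.subset_univ A) hU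
      (fun x _ => hsing x) hsplit
    rw [Finset.card_univ] at hlb
    omega


/-- A hierarchy `H` on `X` is maximum (i.e. `|H| = 2|X| - 1`) iff it contains all trivial
clusters and every member of size `> 1` is a disjoint union of two members of `H`. -/
theorem hierarchy_maximum_iff {α : Type*} [Fintype α] [DecidableEq α] [Nonempty α]
    (H : Finset (Finset α)) (hH : IsHierarchy H) :
    H.card = 2 * Fintype.card α - 1 ↔
      (((∀ x : α, {x} ∈ H) ∧ Finset.univ ∈ H) ∧
        ∀ C ∈ H, 1 < C.card → ∃ A ∈ H, ∃ B ∈ H, Disjoint A B ∧ C = A ∪ B) := by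
  exact MaxHierAux.hierarchy_maximum_iff' H hH
end
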